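/- The multi-fixpoint-combinator translation N is convergence-equivalent: for every ℒ-expression s, s ↓_name if and only if N(s) ↓_lcc. -/

import Mathlib

/-! # Core syntax for the calculi L_lcc, L_name and LR

Following Schmidt-Schauß, Sabel, Machkasova,
"Simulation in the Call-by-Need Lambda-Calculus with Letrec, Case, Constructors, and Seq".

Expressions use de Bruijn indices.  A signature fixes the set of types, the data
constructors of each type together with their arities, and a distinguished type `Bool`
with the 0-ary constructors `True` and `False`. -/



structure Sig : Type 1 where
  TyName : Type
  CName : TyName → Type
  deceq : ∀ T, DecidableEq (CName T)
  arity : ∀ T, CName T → ℕ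
  boolTy : TyName
  trueC : CName boolTy
  falseC : CName boolTy
  true_arity : arity boolTy trueC = 0
  false_arity : arity boolTy falseC = 0
  true_ne_false : trueC ≠ falseC

variable (S : Sig)

/-- ℒ-expressions (de Bruijn): variables, applications, abstractions, fully saturated
constructor applications, `seq`, `case` (with exactly one alternative per constructor
of the scrutinized type; the alternative for `c` binds `arity c` variables), and
`letrec` with `n+1` mutually recursive bindings (so at least one binding); the
bindings and the body are under the `n+1` letrec binders.
The letrec-free expressions are the expressions of `L_lcc`. -/
inductive Exp : Type where
  | var : ℕ → Exp
  | app : Exp → Exp → Exp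
  | lam : Exp → Exp
  | constr : (T : S.TyName) → (c : S.CName T) → (Fin (S.arity T c) → Exp) → Exp
  | seqE : Exp → Exp → Exp
  | caseE : (T : S.TyName) → Exp → ((c : S.CName T) → Exp) → Exp
  | letrecE : (n : ℕ) → (Fin (n+1) → Exp) → Exp → Exp

namespace Core

variable {S}

/-- lift a renaming under `m` binders -/
def liftN (m : ℕ) (f : ℕ → ℕ) : ℕ → ℕ := fun k => if k < m then k else f (k - m) + m

/-- renaming of de Bruijn indices -/
def rename (f : ℕ → ℕ) : Exp S → Exp S
  | .var k => .var (f k)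
  | .app u v => .app (rename f u) (rename f v)
  | .lam u => .lam (rename (liftN 1 f) u)
  | .constr T c args => .constr T c (fun i => rename f (args i))
  | .seqE u v => .seqE (rename f u) (rename f v)
  | .caseE T e alts => .caseE T (rename f e) (fun c => rename (liftN (S.arity T c) f) (alts c))
  | .letrecE n b t => .letrecE n (fun i => rename (liftN (n+1) f) (b i)) (rename (liftN (n+1) f) t)

/-- lift a substitution under `m` binders -/
def upN (m : ℕ) (σ : ℕ → Exp S) : ℕ → Exp S :=
  fun k => if k < m then .var k else rename (· + m) (σ (k - m))

/-- parallel substitution -/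
def subst (σ : ℕ → Exp S) : Exp S → Exp S
  | .var k => σ k
  | .app u v => .app (subst σ u) (subst σ v)
  | .lam u => .lam (subst (upN 1 σ) u)
  | .constr T c args => .constr T c (fun i => subst σ (args i))
  | .seqE u v => .seqE (subst σ u) (subst σ v)
  | .caseE T e alts => .caseE T (subst σ e) (fun c => subst (upN (S.arity T c) σ) (alts c))
  | .letrecE n b t => .letrecE n (fun i => subst (upN (n+1) σ) (b i)) (subst (upN (n+1) σ) t)

/-- the substitution `[t/x0]` for the outermost binder -/
def consSub (t : Exp S) : ℕ → Exp S
  | 0 => t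
  | (k+1) => .var k

/-- the substitution replacing the `m` innermost binders by `args` -/
def instSub {m : ℕ} (args : Fin m → Exp S) : ℕ → Exp S :=
  fun k => if h : k < m then args ⟨k, h⟩ else .var (k - m)

/-- `closedUnder d e`: all free de Bruijn indices of `e` are `< d` -/
def closedUnder : ℕ → Exp S → Prop
  | d, .var k => k < d
  | d, .app u v => closedUnder d u ∧ closedUnder d v
  | d, .lam u => closedUnder (d+1) u
  | d, .constr _ _ args => ∀ i, closedUnder d (args i)
  | d, .seqE u v => closedUnder d u ∧ closedUnder d v
  | d, .caseE T e alts => closedUnder d e ∧ ∀ c, closedUnder (d + S.arity T c) (alts c)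
  | d, .letrecE n b t => (∀ i, closedUnder (d + (n+1)) (b i)) ∧ closedUnder (d + (n+1)) t

/-- a closed expression -/
def closed (e : Exp S) : Prop := closedUnder 0 e

/-- letrec-free expressions, i.e. the expressions of the calculus `L_lcc` -/
def lfree : Exp S → Prop
  | .var _ => True
  | .app u v => lfree u ∧ lfree v
  | .lam u => lfree u
  | .constr _ _ args => ∀ i, lfree (args i)
  | .seqE u v => lfree u ∧ lfree v
  | .caseE _ e alts => lfree e ∧ ∀ c, lfree (alts c)
  | .letrecE _ _ _ => False

/-- values: abstractions and constructor applications -/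
def isValue : Exp S → Prop
  | .lam _ => True
  | .constr _ _ _ => True
  | _ => False

/-- constructor applications -/
def isConstrApp (e : Exp S) : Prop := ∃ T c args, e = .constr T c args

/-- the diverging expression `Ω = (λz. z z) (λx. x x)` -/
def Omega : Exp S :=
  .app (.lam (.app (.var 0) (.var 0))) (.lam (.app (.var 0) (.var 0)))

/-- the constructor `True` (of the distinguished type `Bool`, arity 0) -/
def trueE : Exp S := .constr S.boolTy S.trueC (fun _ => .var 0)

/-- update the alternative for constructor `c0` -/
def updAlt {T : S.TyName} (alts : (c : S.CName T) → Exp S) (c0 : S.CName T) (e : Exp S) :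
    (c : S.CName T) → Exp S :=
  fun c => letI := S.deceq T; if c = c0 then e else alts c

end Core
namespace Core

variable {S : Sig}

/-! ## Contexts -/

/-- reduction contexts of `L_lcc` (and `A`-contexts of `L_name`):
`A ::= [·] | (A s) | (case_T A of alts) | (seq A s)` -/
inductive ACtx (S : Sig) : Type where
  | hole : ACtx S
  | appA : ACtx S → Exp S → ACtx S
  | seqA : ACtx S → Exp S → ACtx S
  | caseA : (T : S.TyName) → ACtx S → ((c : S.CName T) → Exp S) → ACtx S

/-- plugging an expression into an `A`-context -/
def plugA : ACtx S → Exp S → Exp S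
  | .hole, e => e
  | .appA A t, e => .app (plugA A e) t
  | .seqA A t, e => .seqE (plugA A e) t
  | .caseA T A alts, e => .caseE T (plugA A e) alts

/-- renaming an `A`-context (there are no binders above the hole) -/
def renameA (f : ℕ → ℕ) : ACtx S → ACtx S
  | .hole => .hole
  | .appA A t => .appA (renameA f A) (rename f t)
  | .seqA A t => .seqA (renameA f A) (rename f t)
  | .caseA T A alts => .caseA T (renameA f A) (fun c => rename (liftN (S.arity T c) f) (alts c))

/-- general (one-hole, possibly capturing) contexts over ℒ-expressions -/
inductive Ctx (S : Sig) : Type where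
  | hole : Ctx S
  | appL : Ctx S → Exp S → Ctx S
  | appR : Exp S → Ctx S → Ctx S
  | lamC : Ctx S → Ctx S
  | seqL : Ctx S → Exp S → Ctx S
  | seqR : Exp S → Ctx S → Ctx S
  | constrC : (T : S.TyName) → (c : S.CName T) → Fin (S.arity T c) →
      (Fin (S.arity T c) → Exp S) → Ctx S → Ctx S
  | caseScrut : (T : S.TyName) → Ctx S → ((c : S.CName T) → Exp S) → Ctx S
  | caseAlt : (T : S.TyName) → (c0 : S.CName T) → Exp S → ((c : S.CName T) → Exp S) →
      Ctx S → Ctx S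
  | letrecB : (n : ℕ) → Fin (n+1) → (Fin (n+1) → Exp S) → Ctx S → Exp S → Ctx S
  | letrecT : (n : ℕ) → (Fin (n+1) → Exp S) → Ctx S → Ctx S

/-- plugging (capture-permitting) into a general context -/
def plugC : Ctx S → Exp S → Exp S
  | .hole, e => e
  | .appL C t, e => .app (plugC C e) t
  | .appR t C, e => .app t (plugC C e)
  | .lamC C, e => .lam (plugC C e)
  | .seqL C t, e => .seqE (plugC C e) t
  | .seqR t C, e => .seqE t (plugC C e)
  | .constrC T c i args C, e => .constr T c (Function.update args i (plugC C e))
  | .caseScrut T C alts, e => .caseE T (plugC C e) alts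
  | .caseAlt T c0 scrut alts C, e => .caseE T scrut (updAlt alts c0 (plugC C e))
  | .letrecB n i b C t, e => .letrecE n (Function.update b i (plugC C e)) t
  | .letrecT n b C, e => .letrecE n b (plugC C e)

/-- number of binders above the hole of a context -/
def depthC : Ctx S → ℕ
  | .hole => 0
  | .appL C _ => depthC C
  | .appR _ C => depthC C
  | .lamC C => depthC C + 1
  | .seqL C _ => depthC C
  | .seqR _ C => depthC C
  | .constrC _ _ _ _ C => depthC C
  | .caseScrut _ C _ => depthC C
  | .caseAlt T c0 _ _ C => depthC C + S.arity T c0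
  | .letrecB n _ _ C _ => depthC C + (n+1)
  | .letrecT n _ C => depthC C + (n+1)

/-- letrec-free contexts, i.e. the contexts of `L_lcc` -/
def lfreeCtx : Ctx S → Prop
  | .hole => True
  | .appL C t => lfreeCtx C ∧ lfree t
  | .appR t C => lfree t ∧ lfreeCtx C
  | .lamC C => lfreeCtx C
  | .seqL C t => lfreeCtx C ∧ lfree t
  | .seqR t C => lfree t ∧ lfreeCtx C
  | .constrC _ _ _ args C => (∀ i, lfree (args i)) ∧ lfreeCtx C
  | .caseScrut _ C alts => lfreeCtx C ∧ ∀ c, lfree (alts c)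
  | .caseAlt _ _ scrut alts C => lfree scrut ∧ (∀ c, lfree (alts c)) ∧ lfreeCtx C
  | .letrecB _ _ _ _ _ => False
  | .letrecT _ _ _ => False

/-! ## The calculus `L_lcc` -/

/-- the basic reduction rules (nbeta), (nseq), (ncase) of `L_lcc` -/
inductive LccBase : Exp S → Exp S → Prop where
  | nbeta {u t} : LccBase (.app (.lam u) t) (subst (consSub t) u)
  | nseq {v t} : isValue v → LccBase (.seqE v t) t
  | ncase {T c args alts} :
      LccBase (.caseE T (.constr T c args) alts) (subst (instSub args) (alts c))

/-- normal-order reduction of `L_lcc`: a basic rule inside a reduction context -/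
def lccStep (s t : Exp S) : Prop :=
  ∃ (A : ACtx S) (r r' : Exp S), LccBase r r' ∧ s = plugA A r ∧ t = plugA A r'

/-- `s` reduces in finitely many normal-order steps to the value `v` -/
def lccConvTo (s v : Exp S) : Prop := Relation.ReflTransGen lccStep s v ∧ isValue v

/-- convergence in `L_lcc` -/
def lccConv (s : Exp S) : Prop := ∃ v, lccConvTo s v

/-- contextual preorder of `L_lcc` (quantifying over the letrec-free contexts) -/
def leLcc (s t : Exp S) : Prop :=
  ∀ C : Ctx S, lfreeCtx C → lccConv (plugC C s) → lccConv (plugC C t)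

/-- contextual equivalence of `L_lcc` -/
def eqLcc (s t : Exp S) : Prop := leLcc s t ∧ leLcc t s

/-- open extension of a relation, w.r.t. closing `L_lcc`-substitutions -/
def openL (η : Exp S → Exp S → Prop) (s t : Exp S) : Prop :=
  ∀ σ : ℕ → Exp S, (∀ k, lfree (σ k)) →
    closed (subst σ s) → closed (subst σ t) → η (subst σ s) (subst σ t)

/-- `cBot`: expressions all of whose closing `L_lcc`-instances diverge -/
def cBot (s : Exp S) : Prop :=
  ∀ σ : ℕ → Exp S, (∀ k, lfree (σ k)) → closed (subst σ s) → ¬ lccConv (subst σ s)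

/-- greatest fixpoint of a (monotone) operator on relations:
the union of all post-fixed points -/
def gfpRel {α : Type*} (F : (α → α → Prop) → (α → α → Prop)) (a b : α) : Prop :=
  ∃ η, (∀ x y, η x y → F η x y) ∧ η a b

/-- the operator `F_lcc` for applicative similarity in `L_lcc` -/
def Flcc (η : Exp S → Exp S → Prop) (s t : Exp S) : Prop :=
  (∀ s', lccConvTo s (.lam s') →
      ((∃ t', lccConvTo t (.lam t') ∧ openL η s' t') ∨
       (∃ T c targs, lccConvTo t (.constr T c targs) ∧ cBot s'))) ∧
  (∀ T c args, lccConvTo s (.constr T c args) →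
      ∃ targs, lccConvTo t (.constr T c targs) ∧ ∀ i, η (args i) (targs i))

/-- applicative similarity `≼_lcc` in `L_lcc` -/
def simLcc : Exp S → Exp S → Prop := gfpRel Flcc

end Core
namespace Core

variable {S : Sig}

/-! ## The test contexts `Q_lcc` and `Q_CE` -/

/-- the context `case_T [·] of … ((c x1 … x_ar) → x_i) …`, all other alternatives `Ω` -/
def caseSelCtx (T : S.TyName) (c : S.CName T) (i : Fin (S.arity T c)) : Exp S → Exp S :=
  fun e => .caseE T e (fun c' => letI := S.deceq T; if c' = c then .var i else Omega)

/-- the context `case_T [·] of … ((c x1 … x_ar) → True) …`, all other alternatives `Ω` -/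
def caseTrueCtx (T : S.TyName) (c : S.CName T) : Exp S → Exp S :=
  fun e => .caseE T e (fun c' => letI := S.deceq T; if c' = c then trueE else Omega)

/-- the set `Q_lcc`: application to a closed `L_lcc`-expression, the selector case
contexts, and the `True` case contexts -/
def Qlcc (S : Sig) : Set (Exp S → Exp S) :=
  {f | (∃ r : Exp S, lfree r ∧ closed r ∧ f = fun e => .app e r) ∨
       (∃ T c i, f = caseSelCtx T c i) ∨
       (∃ T c, f = caseTrueCtx T c)}

/-- the set `CE_lcc` of closed letrec-free expressions generated by
`r ::= Ω | λx.s | (c r1 … r_ar)` -/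
inductive CE : Exp S → Prop where
  | omega : CE Omega
  | abs {u : Exp S} : lfree (Exp.lam u) → closed (Exp.lam u) → CE (.lam u)
  | constrI {T c} {args : Fin (S.arity T c) → Exp S} :
      (∀ i, CE (args i)) → CE (.constr T c args)

/-- the set `Q_CE`: like `Q_lcc`, but the arguments in application contexts are
restricted to `CE_lcc` -/
def QCE (S : Sig) : Set (Exp S → Exp S) :=
  {f | (∃ r : Exp S, CE r ∧ f = fun e => .app e r) ∨
       (∃ T c i, f = caseSelCtx T c i) ∨
       (∃ T c, f = caseTrueCtx T c)}

/-- `Q1 (Q2 (… (Qn s)))` -/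
def applyAll (l : List (Exp S → Exp S)) (s : Exp S) : Exp S := l.foldr (fun f e => f e) s

/-! ### `Q`-similarity and the inductive `Q`-preorder in `L_lcc` -/

/-- the `Q`-experiment operator for `L_lcc`, instantiated with a set `𝒬` of contexts -/
def FQlcc (𝒬 : Set (Exp S → Exp S)) (η : Exp S → Exp S → Prop) (s t : Exp S) : Prop :=
  ∀ v1, lccConvTo s v1 → ∃ v2, lccConvTo t v2 ∧ ∀ f ∈ 𝒬, η (f v1) (f v2)

/-- `𝒬`-similarity in `L_lcc` -/
def simQlcc (𝒬 : Set (Exp S → Exp S)) : Exp S → Exp S → Prop := gfpRel (FQlcc 𝒬)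

/-- the inductively defined preorder `≤_{lcc,𝒬}` -/
def leQlcc (𝒬 : Set (Exp S → Exp S)) (s t : Exp S) : Prop :=
  ∀ l : List (Exp S → Exp S), (∀ f ∈ l, f ∈ 𝒬) →
    lccConv (applyAll l s) → lccConv (applyAll l t)

end Core
namespace Core

variable {S : Sig}

/-! ## The call-by-need calculus `LR` -/

/-- variable-to-variable binding chains in a letrec environment -/
inductive derefChain {n : ℕ} (b : Fin (n+1) → Exp S) : Fin (n+1) → Fin (n+1) → Prop where
  | refl (i) : derefChain b i i
  | step {i j k : Fin (n+1)} : b i = .var (j : ℕ) → derefChain b j k → derefChain b i k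

/-- `Needed b body i`: binding `i` is visited by the labeling algorithm (its value is
needed), starting from the body of the top-level letrec -/
inductive Needed {n : ℕ} (b : Fin (n+1) → Exp S) (body : Exp S) : Fin (n+1) → Prop where
  | ofBody {A : ACtx S} {i : Fin (n+1)} : body = plugA A (.var (i : ℕ)) → Needed b body i
  | ofBind {k} {A : ACtx S} {i : Fin (n+1)} :
      Needed b body k → b k = plugA A (.var (i : ℕ)) → Needed b body i

/-- renaming used when merging letrec environments: the outer part
(`N` outer bindings, `M` inner bindings) -/
def rhoOut (N M : ℕ) : ℕ → ℕ := fun k => if k < N then k else k + M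

/-- renaming used when merging letrec environments: the inner part -/
def rhoIn (N M : ℕ) : ℕ → ℕ :=
  fun k => if k < M then k + N else if k < M + N then k - M else k

/-- merged environment of `(llet-in)`: outer bindings first, then inner bindings -/
def mergeEnv {n m : ℕ} (b : Fin (n+1) → Exp S) (b2 : Fin (m+1) → Exp S) :
    Fin (n+m+1+1) → Exp S :=
  fun j => if h : (j : ℕ) < n+1
    then rename (rhoOut (n+1) (m+1)) (b ⟨j, h⟩)
    else rename (rhoIn (n+1) (m+1)) (b2 ⟨(j : ℕ) - (n+1), by omega⟩)

/-- merged environment of `(llet-e)`: the environment of the letrec bound at `i`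
is flattened into the outer environment, the binding `i` becomes the inner body -/
def mergeEnvAt {n m : ℕ} (b : Fin (n+1) → Exp S) (i : Fin (n+1))
    (b2 : Fin (m+1) → Exp S) (t2 : Exp S) : Fin (n+m+1+1) → Exp S :=
  fun j => if h : (j : ℕ) < n+1
    then (if (⟨j, h⟩ : Fin (n+1)) = i
          then rename (rhoIn (n+1) (m+1)) t2
          else rename (rhoOut (n+1) (m+1)) (b ⟨j, h⟩))
    else rename (rhoIn (n+1) (m+1)) (b2 ⟨(j : ℕ) - (n+1), by omega⟩)

/-- the environment produced by `(case-in)`/`(case-e)` with `arity c = m+1`: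
all old bindings are shifted, binding `j` becomes `c y1 … y_{m+1}` for the fresh
bindings `y_q = s_q` appended at the end -/
def caseShareEnv {n m : ℕ} (b : Fin (n+1) → Exp S) (j : Fin (n+1))
    {T : S.TyName} (c : S.CName T) (h : S.arity T c = m+1)
    (args : Fin (S.arity T c) → Exp S) : Fin (n+m+1+1) → Exp S :=
  fun p => if hp : (p : ℕ) < n+1
    then (if (⟨p, hp⟩ : Fin (n+1)) = j
          then .constr T c (fun q => .var (n+1+(q : ℕ)))
          else rename (rhoOut (n+1) (m+1)) (b ⟨p, hp⟩))
    else rename (rhoOut (n+1) (m+1)) (args (Fin.cast h.symm ⟨(p : ℕ) - (n+1), by omega⟩))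

/-- the replacement for a `(case-in)`/`(case-e)` redex: `letrec z1 = y1, …, z_{m+1} = y_{m+1}
in alt`, where the `y_q` are the fresh environment bindings (indices `n+1+q` at top level) -/
def caseShareBody {n m : ℕ} {T : S.TyName} (c : S.CName T) (_h : S.arity T c = m+1)
    (alts : (c : S.CName T) → Exp S) : Exp S :=
  .letrecE m (fun q => .var (n+1+(m+1)+(q : ℕ)))
    (rename (liftN (m+1) (rhoOut (n+1) (m+1))) (alts c))

/-- the basic `LR`-rules not involving the top-level environment:
(lbeta), (seq-c), (case-c), (lapp), (lseq), (lcase) -/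
inductive LRbase : Exp S → Exp S → Prop where
  | lbeta {u t} :
      LRbase (.app (.lam u) t) (.letrecE 0 (fun _ => rename (· + 1) t) u)
  | seqc {v t} : isValue v → LRbase (.seqE v t) t
  | casec0 {T c args alts} (h : S.arity T c = 0) :
      LRbase (.caseE T (.constr T c args) alts) (alts c)
  | casec1 {T c args alts m} (h : S.arity T c = m+1) :
      LRbase (.caseE T (.constr T c args) alts)
        (.letrecE m (fun i => rename (· + (m+1)) (args (Fin.cast h.symm i))) (alts c))
  | lapp {n b e t} :
      LRbase (.app (.letrecE n b e) t) (.letrecE n b (.app e (rename (· + (n+1)) t)))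
  | lseq {n b e t} :
      LRbase (.seqE (.letrecE n b e) t) (.letrecE n b (.seqE e (rename (· + (n+1)) t)))
  | lcase {n b e T alts} :
      LRbase (.caseE T (.letrecE n b e) alts)
        (.letrecE n b (.caseE T e (fun c => rename (liftN (S.arity T c) (· + (n+1))) (alts c))))

/-- normal-order reduction `→_LR` of the call-by-need calculus `LR`:
the rules of Fig. 1, applied at the position determined by the labeling algorithm
(in the body or in a needed binding of the top-level letrec, or — for expressions
without a top-level letrec — along the application/seq/case spine). -/
inductive LRstep : Exp S → Exp S → Prop where
  /- basic rule at the top (no top-level letrec environment involved): -/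
  | topA {A : ACtx S} {r r'} : LRbase r r' → LRstep (plugA A r) (plugA A r')
  /- basic rule in the body of the top-level letrec: -/
  | bodyA {n} {b : Fin (n+1) → Exp S} {A : ACtx S} {r r'} :
      LRbase r r' → LRstep (.letrecE n b (plugA A r)) (.letrecE n b (plugA A r'))
  /- basic rule inside a needed binding: -/
  | bindA {n} {b : Fin (n+1) → Exp S} {body} {i : Fin (n+1)} {A : ACtx S} {r r'} :
      Needed b body i → b i = plugA A r → LRbase r r' →
      LRstep (.letrecE n b body) (.letrecE n (Function.update b i (plugA A r')) body)
  /- (llet-in): -/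
  | lletIn {n b m b2 t2} :
      LRstep (.letrecE n b (.letrecE m b2 t2))
        (.letrecE (n+m+1) (mergeEnv b b2) (rename (rhoIn (n+1) (m+1)) t2))
  /- (llet-e): -/
  | lletE {n b body} {i : Fin (n+1)} {m b2 t2} :
      Needed b body i → b i = .letrecE m b2 t2 →
      LRstep (.letrecE n b body)
        (.letrecE (n+m+1) (mergeEnvAt b i b2 t2) (rename (rhoOut (n+1) (m+1)) body))
  /- (cp-in): -/
  | cpIn {n} {b : Fin (n+1) → Exp S} {A : ACtx S} {i j : Fin (n+1)} {u} :
      derefChain b i j → b j = .lam u →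
      LRstep (.letrecE n b (plugA A (.var (i : ℕ)))) (.letrecE n b (plugA A (.lam u)))
  /- (cp-e): -/
  | cpE {n} {b : Fin (n+1) → Exp S} {body} {k : Fin (n+1)} {A : ACtx S} {i j : Fin (n+1)} {u} :
      Needed b body k → b k = plugA A (.var (i : ℕ)) → derefChain b i j → b j = .lam u →
      LRstep (.letrecE n b body) (.letrecE n (Function.update b k (plugA A (.lam u))) body)
  /- (seq-in): -/
  | seqIn {n} {b : Fin (n+1) → Exp S} {A : ACtx S} {i j : Fin (n+1)} {t} :
      derefChain b i j → isConstrApp (b j) →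
      LRstep (.letrecE n b (plugA A (.seqE (.var (i : ℕ)) t)))
        (.letrecE n b (plugA A t))
  /- (seq-e): -/
  | seqEe {n} {b : Fin (n+1) → Exp S} {body} {k : Fin (n+1)} {A : ACtx S} {i j : Fin (n+1)} {t} :
      Needed b body k → b k = plugA A (.seqE (.var (i : ℕ)) t) →
      derefChain b i j → isConstrApp (b j) →
      LRstep (.letrecE n b body) (.letrecE n (Function.update b k (plugA A t)) body)
  /- (case-in), scrutinized constructor of arity 0: -/
  | caseIn0 {n} {b : Fin (n+1) → Exp S} {A : ACtx S} {i j : Fin (n+1)} {T c args alts} :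
      derefChain b i j → b j = .constr T c args → S.arity T c = 0 →
      LRstep (.letrecE n b (plugA A (.caseE T (.var (i : ℕ)) alts)))
        (.letrecE n b (plugA A (alts c)))
  /- (case-e), scrutinized constructor of arity 0: -/
  | caseE0 {n} {b : Fin (n+1) → Exp S} {body} {k : Fin (n+1)} {A : ACtx S} {i j : Fin (n+1)}
      {T c args alts} :
      Needed b body k → b k = plugA A (.caseE T (.var (i : ℕ)) alts) →
      derefChain b i j → b j = .constr T c args → S.arity T c = 0 →
      LRstep (.letrecE n b body) (.letrecE n (Function.update b k (plugA A (alts c))) body)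
  /- (case-in), arity ≥ 1: the constructor arguments are shared in fresh bindings -/
  | caseIn1 {n} {b : Fin (n+1) → Exp S} {A : ACtx S} {i j : Fin (n+1)} {T c args alts m}
      (h : S.arity T c = m+1) :
      derefChain b i j → b j = .constr T c args →
      LRstep (.letrecE n b (plugA A (.caseE T (.var (i : ℕ)) alts)))
        (.letrecE (n+m+1) (caseShareEnv b j c h args)
          (plugA (renameA (rhoOut (n+1) (m+1)) A) (caseShareBody (n := n) c h alts)))
  /- (case-e), arity ≥ 1: -/
  | caseE1 {n} {b : Fin (n+1) → Exp S} {body} {k : Fin (n+1)} {A : ACtx S} {i j : Fin (n+1)}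
      {T c args alts m} (h : S.arity T c = m+1) :
      Needed b body k → b k = plugA A (.caseE T (.var (i : ℕ)) alts) →
      derefChain b i j → b j = .constr T c args →
      LRstep (.letrecE n b body)
        (.letrecE (n+m+1)
          (Function.update (caseShareEnv b j c h args)
            (Fin.castLE (by omega) k)
            (plugA (renameA (rhoOut (n+1) (m+1)) A) (caseShareBody (n := n) c h alts)))
          (rename (rhoOut (n+1) (m+1)) body))

/-- weak head normal forms of `LR`: values, `letrec Env in v` for a value `v`, and
`letrec x1 = (c s⃗), x2 = x1, …, xm = x_{m-1}, Env in xm` -/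
def isLRwhnf (s : Exp S) : Prop :=
  isValue s ∨
  ∃ (n : ℕ) (b : Fin (n+1) → Exp S) (body : Exp S), s = .letrecE n b body ∧
    (isValue body ∨ ∃ i j : Fin (n+1), body = .var (i : ℕ) ∧ derefChain b i j ∧ isConstrApp (b j))

/-- `s` reduces in finitely many `→_LR`-steps to an `LR`-WHNF `v` -/
def lrConvTo (s v : Exp S) : Prop := Relation.ReflTransGen LRstep s v ∧ isLRwhnf v

/-- convergence in `LR` -/
def lrConv (s : Exp S) : Prop := ∃ v, lrConvTo s v

/-- contextual preorder of `LR` -/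
def leLR (s t : Exp S) : Prop := ∀ C : Ctx S, lrConv (plugC C s) → lrConv (plugC C t)

/-- contextual equivalence of `LR` -/
def eqLR (s t : Exp S) : Prop := leLR s t ∧ leLR t s

end Core
namespace Core

variable {S : Sig}

/-! ## The call-by-name calculus `L_name` -/

/-- a letrec frame (one `letrec` environment) -/
def Frame (S : Sig) : Type := Σ n : ℕ, Fin (n+1) → Exp S

/-- plugging under a stack of letrec frames (`L`-contexts), outermost frame first -/
def plugFrames : List (Frame S) → Exp S → Exp S
  | [], e => e
  | ⟨n, b⟩ :: fs, e => .letrecE n b (plugFrames fs e)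

/-- looking up a de Bruijn index in a stack of letrec frames given innermost-first;
the result is weakened to the innermost level -/
def lookRev : List (Frame S) → ℕ → Option (Exp S)
  | [], _ => none
  | ⟨n, b⟩ :: rest, k =>
      if h : k < n+1 then some (b ⟨k, h⟩)
      else (lookRev rest (k - (n+1))).map (rename (· + (n+1)))

/-- the basic rules of `L_name`: (beta), (seq), (case) — with substitution —
and (lapp), (lseq), (lcase) -/
inductive NBase : Exp S → Exp S → Prop where
  | beta {u t} : NBase (.app (.lam u) t) (subst (consSub t) u)
  | seqv {v t} : isValue v → NBase (.seqE v t) t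
  | casec {T c args alts} :
      NBase (.caseE T (.constr T c args) alts) (subst (instSub args) (alts c))
  | lapp {n b e t} :
      NBase (.app (.letrecE n b e) t) (.letrecE n b (.app e (rename (· + (n+1)) t)))
  | lseq {n b e t} :
      NBase (.seqE (.letrecE n b e) t) (.letrecE n b (.seqE e (rename (· + (n+1)) t)))
  | lcase {n b e T alts} :
      NBase (.caseE T (.letrecE n b e) alts)
        (.letrecE n b (.caseE T e (fun c => rename (liftN (S.arity T c) (· + (n+1))) (alts c))))

/-- normal-order reduction `→_name` of `L_name`: a basic rule, or the copy rule (gcp),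
inside a reduction context `L[A]` -/
inductive NStep : Exp S → Exp S → Prop where
  | base {fs : List (Frame S)} {A : ACtx S} {r r'} :
      NBase r r' → NStep (plugFrames fs (plugA A r)) (plugFrames fs (plugA A r'))
  | gcp {fs : List (Frame S)} {A : ACtx S} {k : ℕ} {e : Exp S} :
      lookRev fs.reverse k = some e →
      NStep (plugFrames fs (plugA A (.var k))) (plugFrames fs (plugA A e))

/-- weak head normal forms of `L_name`: `L[v]` for a value `v` -/
def isNameWhnf (s : Exp S) : Prop :=
  ∃ (fs : List (Frame S)) (v : Exp S), s = plugFrames fs v ∧ isValue v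

/-- `s` reduces in finitely many `→_name`-steps to an `L_name`-WHNF `v` -/
def nameConvTo (s v : Exp S) : Prop := Relation.ReflTransGen NStep s v ∧ isNameWhnf v

/-- convergence in `L_name` -/
def nameConv (s : Exp S) : Prop := ∃ v, nameConvTo s v

/-- contextual preorder of `L_name` -/
def leName (s t : Exp S) : Prop := ∀ C : Ctx S, nameConv (plugC C s) → nameConv (plugC C t)

/-- contextual equivalence of `L_name` -/
def eqName (s t : Exp S) : Prop := leName s t ∧ leName t s

/-! ## The translation `N : L_name → L_lcc` via multi-fixpoint combinators -/

/-- iterated application `f a1 … an` -/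
def apps (f : Exp S) (l : List (Exp S)) : Exp S := l.foldl .app f

/-- iterated abstraction `λ^k. e` -/
def lamN : ℕ → Exp S → Exp S
  | 0, e => e
  | (k+1), e => .lam (lamN k e)

/-- shift all indices `≥ c` by `k` -/
def shiftCut (c k : ℕ) : Exp S → Exp S := rename (fun x => if x < c then x else x + k)

/-- the argument list `[g (N-1), …, g 0]`, so that after `N` beta steps the
binder with de Bruijn index `i` receives `g i` -/
def argsOf {N : ℕ} (g : Fin N → Exp S) : List (Exp S) := (List.ofFn g).reverse

/-- `U_i = (x_i' x_1' … x_n')` (under the outer binders) -/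
def Uarg (N : ℕ) (i : Fin N) : Exp S :=
  apps (.var (i : ℕ)) (argsOf (fun j : Fin N => .var (j : ℕ)))

/-- `X_i' = λ x1 … xn. F_i (x1 x1 … xn) … (xn x1 … xn)` with `F_i = λ x1 … xn. gi` -/
def Xarg (N : ℕ) (gi : Exp S) : Exp S :=
  lamN N (apps (lamN N (shiftCut N N gi))
    (argsOf (fun j : Fin N => apps (.var (j : ℕ)) (argsOf (fun l : Fin N => .var (l : ℕ))))))

/-- the translation of one letrec: `(λ x1' … xn'. (λ x1 … xn. t') U1 … Un) X1' … Xn'` -/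
def letrecTrans (N : ℕ) (g : Fin N → Exp S) (t' : Exp S) : Exp S :=
  apps (lamN N (apps (lamN N (shiftCut N N t')) (argsOf (Uarg N))))
    (argsOf (fun i => Xarg N (g i)))

/-- the translation `N : L_name → L_lcc`, eliminating letrec by multi-fixpoint
combinators; it is homomorphic on all other constructs.
(The translation `W : LR → L_name` is the identity.) -/
def Ntr : Exp S → Exp S
  | .var k => .var k
  | .app u v => .app (Ntr u) (Ntr v)
  | .lam u => .lam (Ntr u)
  | .constr T c args => .constr T c (fun i => Ntr (args i))
  | .seqE u v => .seqE (Ntr u) (Ntr v)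
  | .caseE T e alts => .caseE T (Ntr e) (fun c => Ntr (alts c))
  | .letrecE n b t => letrecTrans (n+1) (fun i => Ntr (b i)) (Ntr t)

end Core
namespace Core

variable {S : Sig}

/-! ## `Q`-similarity in `LR` -/

/-- open extension of a relation w.r.t. closing ℒ-substitutions -/
def openAll (η : Exp S → Exp S → Prop) (s t : Exp S) : Prop :=
  ∀ σ : ℕ → Exp S, closed (subst σ s) → closed (subst σ t) → η (subst σ s) (subst σ t)

/-- the `Q`-experiment operator for `LR`, instantiated with a set `𝒬` of contexts -/
def FQLR (𝒬 : Set (Exp S → Exp S)) (η : Exp S → Exp S → Prop) (s t : Exp S) : Prop :=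
  ∀ v1, lrConvTo s v1 → ∃ v2, lrConvTo t v2 ∧ ∀ f ∈ 𝒬, η (f v1) (f v2)

/-- `𝒬`-similarity in `LR` -/
def simQLR (𝒬 : Set (Exp S → Exp S)) : Exp S → Exp S → Prop := gfpRel (FQLR 𝒬)

/-- the inductively defined preorder `≤_{LR,𝒬}` -/
def leQLR (𝒬 : Set (Exp S → Exp S)) (s t : Exp S) : Prop :=
  ∀ l : List (Exp S → Exp S), (∀ f ∈ l, f ∈ 𝒬) →
    lrConv (applyAll l s) → lrConv (applyAll l t)

end Core

namespace Core

variable {S : Sig}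

/-! ### substitution calculus -/

theorem liftN_liftN (m k : ℕ) (f : ℕ → ℕ) :
    liftN m (liftN k f) = liftN (m + k) f := by
  funext x
  simp only [liftN]
  rcases lt_or_ge x m with h | h
  · rw [if_pos h, if_pos (by omega : x < m + k)]
  · rw [if_neg (by omega : ¬ x < m)]
    rcases lt_or_ge x (m+k) with h2 | h2
    · rw [if_pos (by omega : x - m < k), if_pos h2]; omega
    · rw [if_neg (by omega : ¬ x - m < k), if_neg (by omega : ¬ x < m + k),
        (by omega : x - m - k = x - (m + k))]
      omega

theorem liftN_comp (m : ℕ) (f g : ℕ → ℕ) :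
    (fun k => liftN m f (liftN m g k)) = liftN m (fun k => f (g k)) := by
  funext x
  simp only [liftN]
  rcases lt_or_ge x m with h | h
  · simp only [if_pos h]
  · simp only [if_neg (by omega : ¬ x < m), if_neg (by omega : ¬ g (x - m) + m < m),
      Nat.add_sub_cancel]

theorem rename_rename (f g : ℕ → ℕ) (e : Exp S) :
    rename f (rename g e) = rename (fun k => f (g k)) e := by
  induction e generalizing f g with
  | var k => simp [rename]
  | app u v ihu ihv => simp [rename, ihu, ihv]
  | lam u ih => simp [rename, ih, liftN_comp]
  | constr T c args ih => simp only [rename]; exact congrArg _ (funext fun i => ih i f g)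
  | seqE u v ihu ihv => simp [rename, ihu, ihv]
  | caseE T e alts ihe ih =>
      simp only [rename, ihe]
      refine congrArg _ (funext fun c => ?_)
      rw [ih, liftN_comp]
  | letrecE n b t ihb iht =>
      simp only [rename]
      refine congrArg₂ _ (funext fun i => ?_) ?_
      · rw [ihb, liftN_comp]
      · rw [iht, liftN_comp]

theorem upN_liftN (m : ℕ) (σ : ℕ → Exp S) (f : ℕ → ℕ) :
    (fun k => upN m σ (liftN m f k)) = upN m (fun k => σ (f k)) := by
  funext x
  simp only [liftN, upN]
  rcases lt_or_ge x m with h | h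
  · simp only [if_pos h]
  · simp only [if_neg (by omega : ¬ x < m), if_neg (by omega : ¬ f (x - m) + m < m),
      Nat.add_sub_cancel]

theorem subst_rename (σ : ℕ → Exp S) (f : ℕ → ℕ) (e : Exp S) :
    subst σ (rename f e) = subst (fun k => σ (f k)) e := by
  induction e generalizing σ f with
  | var k => simp [rename, subst]
  | app u v ihu ihv => simp [rename, subst, ihu, ihv]
  | lam u ih => simp [rename, subst, ih, upN_liftN]
  | constr T c args ih =>
      simp only [rename, subst]; exact congrArg _ (funext fun i => ih i σ f)
  | seqE u v ihu ihv => simp [rename, subst, ihu, ihv]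
  | caseE T e alts ihe ih =>
      simp only [rename, subst, ihe]
      refine congrArg _ (funext fun c => ?_)
      rw [ih, upN_liftN]
  | letrecE n b t ihb iht =>
      simp only [rename, subst]
      refine congrArg₂ _ (funext fun i => ?_) ?_
      · rw [ihb, upN_liftN]
      · rw [iht, upN_liftN]

theorem liftN_upN (m : ℕ) (f : ℕ → ℕ) (σ : ℕ → Exp S) :
    (fun k => rename (liftN m f) (upN m σ k)) = upN m (fun k => rename f (σ k)) := by
  funext x
  simp only [upN]
  rcases lt_or_ge x m with h | h
  · rw [if_pos h, if_pos h]; simp [rename, liftN, h]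
  · rw [if_neg (by omega : ¬ x < m), if_neg (by omega : ¬ x < m), rename_rename, rename_rename]
    congr 1
    funext y
    simp [liftN, (by omega : ¬ y + m < m), Nat.add_sub_cancel]

theorem rename_subst (f : ℕ → ℕ) (σ : ℕ → Exp S) (e : Exp S) :
    rename f (subst σ e) = subst (fun k => rename f (σ k)) e := by
  induction e generalizing σ f with
  | var k => simp [rename, subst]
  | app u v ihu ihv => simp [rename, subst, ihu, ihv]
  | lam u ih => simp [rename, subst, ih, liftN_upN]
  | constr T c args ih =>
      simp only [rename, subst]; exact congrArg _ (funext fun i => ih i f σ)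
  | seqE u v ihu ihv => simp [rename, subst, ihu, ihv]
  | caseE T e alts ihe ih =>
      simp only [rename, subst, ihe]
      refine congrArg _ (funext fun c => ?_)
      rw [ih, liftN_upN]
  | letrecE n b t ihb iht =>
      simp only [rename, subst]
      refine congrArg₂ _ (funext fun i => ?_) ?_
      · rw [ihb, liftN_upN]
      · rw [iht, liftN_upN]

theorem upN_upN (m : ℕ) (σ τ : ℕ → Exp S) :
    (fun k => subst (upN m σ) (upN m τ k)) = upN m (fun k => subst σ (τ k)) := by
  funext x
  simp only [upN]
  rcases lt_or_ge x m with h | h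
  · rw [if_pos h, if_pos h]; simp [subst, upN, h]
  · rw [if_neg (by omega : ¬ x < m), if_neg (by omega : ¬ x < m), subst_rename, rename_subst]
    congr 1
    funext y
    simp [upN, (by omega : ¬ y + m < m), Nat.add_sub_cancel]

theorem subst_subst (σ τ : ℕ → Exp S) (e : Exp S) :
    subst σ (subst τ e) = subst (fun k => subst σ (τ k)) e := by
  induction e generalizing σ τ with
  | var k => simp [subst]
  | app u v ihu ihv => simp [subst, ihu, ihv]
  | lam u ih => simp [subst, ih, upN_upN]
  | constr T c args ih =>
      simp only [subst]; exact congrArg _ (funext fun i => ih i σ τ)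
  | seqE u v ihu ihv => simp [subst, ihu, ihv]
  | caseE T e alts ihe ih =>
      simp only [subst, ihe]
      refine congrArg _ (funext fun c => ?_)
      rw [ih, upN_upN]
  | letrecE n b t ihb iht =>
      simp only [subst]
      refine congrArg₂ _ (funext fun i => ?_) ?_
      · rw [ihb, upN_upN]
      · rw [iht, upN_upN]

theorem upN_var (m : ℕ) : upN m (fun k => Exp.var k) = (fun k => (Exp.var k : Exp S)) := by
  funext x
  simp only [upN]
  rcases lt_or_ge x m with h | h
  · rw [if_pos h]
  · rw [if_neg (by omega : ¬ x < m)]; simp [rename]; omega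

theorem subst_var (e : Exp S) : subst (fun k => Exp.var k) e = e := by
  induction e with
  | var k => simp [subst]
  | app u v ihu ihv => simp [subst, ihu, ihv]
  | lam u ih => simp [subst, upN_var, ih]
  | constr T c args ih => simp only [subst]; exact congrArg _ (funext fun i => ih i)
  | seqE u v ihu ihv => simp [subst, ihu, ihv]
  | caseE T e alts ihe ih =>
      simp only [subst, ihe]
      exact congrArg _ (funext fun c => by rw [upN_var, ih])
  | letrecE n b t ihb iht =>
      simp only [subst]
      exact congrArg₂ _ (funext fun i => by rw [upN_var, ihb]) (by rw [upN_var, iht])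

end Core
namespace Core

variable {S : Sig}

/-! ### A-contexts -/

def compA : ACtx S → ACtx S → ACtx S
  | .hole, B => B
  | .appA A t, B => .appA (compA A B) t
  | .seqA A t, B => .seqA (compA A B) t
  | .caseA T A alts, B => .caseA T (compA A B) alts

theorem plugA_compA (A B : ACtx S) (e : Exp S) :
    plugA (compA A B) e = plugA A (plugA B e) := by
  induction A with
  | hole => rfl
  | appA A t ih => simp [compA, plugA, ih]
  | seqA A t ih => simp [compA, plugA, ih]
  | caseA T A alts ih => simp [compA, plugA, ih]

def substA (σ : ℕ → Exp S) : ACtx S → ACtx S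
  | .hole => .hole
  | .appA A t => .appA (substA σ A) (subst σ t)
  | .seqA A t => .seqA (substA σ A) (subst σ t)
  | .caseA T A alts => .caseA T (substA σ A) (fun c => subst (upN (S.arity T c) σ) (alts c))

theorem subst_plugA (σ : ℕ → Exp S) (A : ACtx S) (e : Exp S) :
    subst σ (plugA A e) = plugA (substA σ A) (subst σ e) := by
  induction A with
  | hole => rfl
  | appA A t ih => simp [substA, plugA, subst, ih]
  | seqA A t ih => simp [substA, plugA, subst, ih]
  | caseA T A alts ih => simp [substA, plugA, subst, ih]

/-! ### values and basic facts -/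

theorem isValue_subst (σ : ℕ → Exp S) {v : Exp S} (h : isValue v) :
    isValue (subst σ v) := by
  cases v <;> simp [isValue, subst] at h ⊢

theorem plugA_eq_lam {A : ACtx S} {e u : Exp S} (h : plugA A e = .lam u) :
    A = .hole ∧ e = .lam u := by
  cases A <;> simp [plugA] at h ⊢ <;> exact h

theorem plugA_eq_constr {A : ACtx S} {e : Exp S} {T c a} (h : plugA A e = .constr T c a) :
    A = .hole ∧ e = .constr T c a := by
  cases A <;> simp [plugA] at h ⊢ <;> exact h

theorem isValue_plugA {A : ACtx S} {e : Exp S} (h : isValue (plugA A e)) :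
    A = .hole := by
  cases A <;> simp [plugA, isValue] at h ⊢

theorem not_lccBase_value {v r' : Exp S} (hv : isValue v) : ¬ LccBase v r' := by
  intro h
  cases h <;> simp [isValue] at hv

theorem lccBase_det {r a b : Exp S} (h1 : LccBase r a) (h2 : LccBase r b) : a = b := by
  cases h1 <;> cases h2 <;> rfl

/-! ### closure of lcc steps -/

theorem lccStep_plugA {s t : Exp S} (A : ACtx S) (h : lccStep s t) :
    lccStep (plugA A s) (plugA A t) := by
  obtain ⟨B, r, r', hb, rfl, rfl⟩ := h
  exact ⟨compA A B, r, r', hb, (plugA_compA ..).symm, (plugA_compA ..).symm⟩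

theorem subst_consSub (σ : ℕ → Exp S) (t u : Exp S) :
    subst (consSub (subst σ t)) (subst (upN 1 σ) u) = subst σ (subst (consSub t) u) := by
  rw [subst_subst, subst_subst]
  congr 1
  funext k
  match k with
  | 0 => simp [upN, consSub, subst]
  | k+1 =>
      simp only [upN, consSub, Nat.add_sub_cancel, if_neg (by omega : ¬ k + 1 < 1)]
      rw [subst_rename]
      simp only [Nat.add_sub_cancel, consSub, subst]
      exact subst_var _

theorem subst_instSub {m : ℕ} (σ : ℕ → Exp S) (args : Fin m → Exp S) (u : Exp S) :
    subst (instSub (fun i => subst σ (args i))) (subst (upN m σ) u)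
      = subst σ (subst (instSub args) u) := by
  rw [subst_subst, subst_subst]
  congr 1
  funext k
  rcases lt_or_ge k m with h | h
  · simp [upN, h, subst, instSub]
  · simp only [upN, if_neg (by omega : ¬ k < m)]
    rw [subst_rename]
    rw [show instSub args k = Exp.var (k - m) by
          simp only [instSub]; rw [dif_neg (by omega : ¬ k < m)]]
    simp only [subst]
    rw [show (fun j => instSub (fun i => subst σ (args i)) (j + m))
          = (fun j => (Exp.var j : Exp S)) by
        funext j; simp only [instSub]; rw [dif_neg (by omega : ¬ j + m < m)]
        congr 1; omega]
    exact subst_var _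

theorem lccBase_subst {r r' : Exp S} (σ : ℕ → Exp S) (h : LccBase r r') :
    LccBase (subst σ r) (subst σ r') := by
  cases h with
  | @nbeta u t =>
      rw [show subst σ (.app (.lam u) t)
            = .app (.lam (subst (upN 1 σ) u)) (subst σ t) from rfl,
          ← subst_consSub]
      exact LccBase.nbeta
  | nseq hv =>
      exact LccBase.nseq (isValue_subst σ hv)
  | @ncase T c args alts =>
      rw [show subst σ (.caseE T (.constr T c args) alts)
            = .caseE T (.constr T c (fun i => subst σ (args i)))
                (fun c => subst (upN (S.arity T c) σ) (alts c)) from rfl,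
          ← subst_instSub]
      exact LccBase.ncase

theorem lccStep_subst {s t : Exp S} (σ : ℕ → Exp S) (h : lccStep s t) :
    lccStep (subst σ s) (subst σ t) := by
  obtain ⟨B, r, r', hb, rfl, rfl⟩ := h
  exact ⟨substA σ B, subst σ r, subst σ r', lccBase_subst σ hb,
    subst_plugA .., subst_plugA ..⟩

theorem rtg_lccStep_plugA {s t : Exp S} (A : ACtx S)
    (h : Relation.ReflTransGen lccStep s t) :
    Relation.ReflTransGen lccStep (plugA A s) (plugA A t) :=
  Relation.ReflTransGen.lift _ (fun _ _ hh => lccStep_plugA A hh) _ _ h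

theorem rtg_lccStep_subst {s t : Exp S} (σ : ℕ → Exp S)
    (h : Relation.ReflTransGen lccStep s t) :
    Relation.ReflTransGen lccStep (subst σ s) (subst σ t) :=
  Relation.ReflTransGen.lift _ (fun _ _ hh => lccStep_subst σ hh) _ _ h

theorem tg_lccStep_plugA {s t : Exp S} (A : ACtx S)
    (h : Relation.TransGen lccStep s t) :
    Relation.TransGen lccStep (plugA A s) (plugA A t) :=
  Relation.TransGen.lift _ (fun _ _ hh => lccStep_plugA A hh) _ _ h

theorem tg_lccStep_subst {s t : Exp S} (σ : ℕ → Exp S)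
    (h : Relation.TransGen lccStep s t) :
    Relation.TransGen lccStep (subst σ s) (subst σ t) :=
  Relation.TransGen.lift _ (fun _ _ hh => lccStep_subst σ hh) _ _ h

/-! ### determinism of lcc reduction -/

theorem decomp_unique {A : ACtx S} {r r' : Exp S} (hr : LccBase r r') :
    ∀ {B : ACtx S} {rb rb' : Exp S}, LccBase rb rb' → plugA A r = plugA B rb →
      A = B ∧ r = rb := by
  induction A with
  | hole =>
      intro B rb rb' hb heq
      cases hr with
      | nbeta =>
          cases B with
          | hole => exact ⟨rfl, heq⟩
          | appA B₁ t =>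
              simp only [plugA] at heq
              obtain ⟨h1, h2⟩ := Exp.app.inj heq
              obtain ⟨rfl, rfl⟩ := plugA_eq_lam h1.symm
              exact absurd hb (not_lccBase_value trivial)
          | seqA B₁ t => simp [plugA] at heq
          | caseA T B₁ alts => simp [plugA] at heq
      | nseq hv =>
          cases B with
          | hole => exact ⟨rfl, heq⟩
          | appA B₁ t => simp [plugA] at heq
          | seqA B₁ t =>
              simp only [plugA] at heq
              obtain ⟨h1, h2⟩ := Exp.seqE.inj heq
              have hB := isValue_plugA (h1 ▸ hv)
              subst hB
              simp only [plugA] at h1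
              subst h1
              exact absurd hb (not_lccBase_value hv)
          | caseA T B₁ alts => simp [plugA] at heq
      | ncase =>
          cases B with
          | hole => exact ⟨rfl, heq⟩
          | appA B₁ t => simp [plugA] at heq
          | seqA B₁ t => simp [plugA] at heq
          | caseA T B₁ alts =>
              simp only [plugA] at heq
              obtain ⟨h1, h2, h3⟩ := Exp.caseE.inj heq
              subst h1
              obtain ⟨rfl, rfl⟩ := plugA_eq_constr h2.symm
              exact absurd hb (not_lccBase_value trivial)
  | appA A₁ t ih =>
      intro B rb rb' hb heq
      cases B with
      | hole =>
          simp only [plugA] at heq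
          cases hb with
          | nbeta =>
              obtain ⟨h1, h2⟩ := Exp.app.inj heq
              obtain ⟨rfl, rfl⟩ := plugA_eq_lam h1
              exact absurd hr (not_lccBase_value trivial)
          | nseq hv => simp [plugA] at heq
          | ncase => simp [plugA] at heq
      | appA B₁ t' =>
          simp only [plugA] at heq
          obtain ⟨h1, rfl⟩ := Exp.app.inj heq
          obtain ⟨rfl, rfl⟩ := ih hb h1
          exact ⟨rfl, rfl⟩
      | seqA B₁ t' => simp [plugA] at heq
      | caseA T B₁ alts => simp [plugA] at heq
  | seqA A₁ t ih =>
      intro B rb rb' hb heq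
      cases B with
      | hole =>
          simp only [plugA] at heq
          cases hb with
          | nbeta => simp at heq
          | nseq hv =>
              obtain ⟨h1, h2⟩ := Exp.seqE.inj heq
              have hB := isValue_plugA (h1 ▸ hv)
              subst hB
              simp only [plugA] at h1
              subst h1
              exact absurd hr (not_lccBase_value hv)
          | ncase => simp at heq
      | appA B₁ t' => simp [plugA] at heq
      | seqA B₁ t' =>
          simp only [plugA] at heq
          obtain ⟨h1, rfl⟩ := Exp.seqE.inj heq
          obtain ⟨rfl, rfl⟩ := ih hb h1
          exact ⟨rfl, rfl⟩
      | caseA T B₁ alts => simp [plugA] at heq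
  | caseA T A₁ alts ih =>
      intro B rb rb' hb heq
      cases B with
      | hole =>
          simp only [plugA] at heq
          cases hb with
          | nbeta => simp at heq
          | nseq hv => simp at heq
          | ncase =>
              obtain ⟨h1, h2, h3⟩ := Exp.caseE.inj heq
              subst h1
              obtain ⟨rfl, rfl⟩ := plugA_eq_constr h2
              exact absurd hr (not_lccBase_value trivial)
      | appA B₁ t' => simp [plugA] at heq
      | seqA B₁ t' => simp [plugA] at heq
      | caseA T' B₁ alts' =>
          simp only [plugA] at heq
          obtain ⟨h1, h2, h3⟩ := Exp.caseE.inj heq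
          subst h1
          obtain ⟨rfl, rfl⟩ := ih hb h2
          rw [eq_of_heq h3]
          exact ⟨rfl, rfl⟩

theorem lcc_det {s t1 t2 : Exp S} (h1 : lccStep s t1) (h2 : lccStep s t2) : t1 = t2 := by
  obtain ⟨A, r, r', hr, rfl, rfl⟩ := h1
  obtain ⟨B, rb, rb', hb, heq, rfl⟩ := h2
  obtain ⟨rfl, rfl⟩ := decomp_unique hr hb heq
  rw [lccBase_det hr hb]

theorem isValue_no_step {v t : Exp S} (hv : isValue v) (h : lccStep v t) : False := by
  obtain ⟨A, r, r', hr, heq, rfl⟩ := h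
  cases v with
  | lam u =>
      obtain ⟨rfl, rfl⟩ := plugA_eq_lam heq.symm
      exact not_lccBase_value (v := .lam u) trivial hr
  | constr T c a =>
      obtain ⟨rfl, rfl⟩ := plugA_eq_constr heq.symm
      exact not_lccBase_value (v := .constr T c a) trivial hr
  | var k => exact hv.elim
  | app u v => exact hv.elim
  | seqE u v => exact hv.elim
  | caseE T e alts => exact hv.elim
  | letrecE n b t => exact hv.elim

end Core
namespace Core

variable {S : Sig}

/-! ### apps / lamN / argsOf / shiftCut -/

theorem rename_apps (f : ℕ → ℕ) (h : Exp S) (l : List (Exp S)) :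
    rename f (apps h l) = apps (rename f h) (l.map (rename f)) := by
  induction l generalizing h with
  | nil => rfl
  | cons a l ih =>
      rw [show apps h (a :: l) = apps (.app h a) l from rfl, ih]
      rfl

theorem subst_apps (σ : ℕ → Exp S) (h : Exp S) (l : List (Exp S)) :
    subst σ (apps h l) = apps (subst σ h) (l.map (subst σ)) := by
  induction l generalizing h with
  | nil => rfl
  | cons a l ih =>
      rw [show apps h (a :: l) = apps (.app h a) l from rfl, ih]
      rfl

theorem liftN_id (m : ℕ) : liftN m (fun k : ℕ => k) = fun k => k := by
  funext x; simp only [liftN]; split <;> omega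

theorem rename_id (e : Exp S) : rename (fun k => k) e = e := by
  induction e with
  | var k => rfl
  | app u v ihu ihv => simp [rename, ihu, ihv]
  | lam u ih => simp [rename, liftN_id, ih]
  | constr T c args ih => simp only [rename]; exact congrArg _ (funext fun i => ih i)
  | seqE u v ihu ihv => simp [rename, ihu, ihv]
  | caseE T e alts ihe ih =>
      simp only [rename, ihe, liftN_id]
      exact congrArg _ (funext fun c => ih c)
  | letrecE n b t ihb iht =>
      simp only [rename, liftN_id]
      exact congrArg₂ _ (funext fun i => ihb i) iht

theorem rename_lamN (f : ℕ → ℕ) (k : ℕ) (e : Exp S) :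
    rename f (lamN k e) = lamN k (rename (liftN k f) e) := by
  induction k generalizing f with
  | zero =>
      simp only [lamN]
      rw [show liftN 0 f = f by funext x; simp [liftN]]
  | succ k ih =>
      show Exp.lam (rename (liftN 1 f) (lamN k e)) = _
      rw [ih, liftN_liftN]
      rfl

theorem upN_add (m k : ℕ) (σ : ℕ → Exp S) : upN m (upN k σ) = upN (m + k) σ := by
  funext x
  simp only [upN]
  rcases lt_or_ge x m with h | h
  · rw [if_pos h, if_pos (by omega : x < m + k)]
  · rw [if_neg (by omega : ¬ x < m)]
    rcases lt_or_ge x (m+k) with h2 | h2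
    · rw [if_pos (by omega : x - m < k), if_pos h2]
      simp [rename]; omega
    · rw [if_neg (by omega : ¬ x - m < k), if_neg (by omega : ¬ x < m + k),
        rename_rename]
      rw [show x - m - k = x - (m + k) by omega]
      congr 1
      funext y; omega

theorem subst_lamN (σ : ℕ → Exp S) (k : ℕ) (e : Exp S) :
    subst σ (lamN k e) = lamN k (subst (upN k σ) e) := by
  induction k generalizing σ with
  | zero =>
      simp only [lamN]
      rw [show upN 0 σ = σ by funext x; simp [upN, rename_id]]
  | succ k ih =>
      show Exp.lam (subst (upN 1 σ) (lamN k e)) = _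
      rw [ih, upN_add]
      rfl

theorem map_argsOf {N : ℕ} (h : Exp S → Exp S) (g : Fin N → Exp S) :
    (argsOf g).map h = argsOf (fun i => h (g i)) := by
  simp [argsOf, List.map_reverse, List.map_ofFn]
  rfl

theorem length_argsOf {N : ℕ} (g : Fin N → Exp S) : (argsOf g).length = N := by
  simp [argsOf]

theorem rename_Uarg (f : ℕ → ℕ) (N : ℕ) (i : Fin N) :
    rename (liftN N f) (Uarg N i) = (Uarg N i : Exp S) := by
  simp only [Uarg, rename_apps, map_argsOf]
  rw [show rename (liftN N f) (Exp.var (i:ℕ)) = (Exp.var (i:ℕ) : Exp S) by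
        simp [rename, liftN, i.isLt],
      show (fun j : Fin N => rename (liftN N f) (Exp.var (j:ℕ)))
          = (fun j : Fin N => (Exp.var (j:ℕ) : Exp S)) by
        funext j; simp [rename, liftN, j.isLt]]

theorem subst_Uarg (σ : ℕ → Exp S) (N : ℕ) (i : Fin N) :
    subst (upN N σ) (Uarg N i) = Uarg N i := by
  simp only [Uarg, subst_apps, map_argsOf]
  rw [show subst (upN N σ) (Exp.var (i:ℕ)) = (Exp.var (i:ℕ) : Exp S) by
        simp [subst, upN, i.isLt],
      show (fun j : Fin N => subst (upN N σ) (Exp.var (j:ℕ)))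
          = (fun j : Fin N => (Exp.var (j:ℕ) : Exp S)) by
        funext j; simp [subst, upN, j.isLt]]

theorem shiftCut_rename (N : ℕ) (f : ℕ → ℕ) (t : Exp S) :
    rename (liftN N (liftN N f)) (shiftCut N N t) = shiftCut N N (rename (liftN N f) t) := by
  simp only [shiftCut, rename_rename]
  congr 1
  funext x
  simp only [liftN]
  split_ifs <;> (try simp only [Nat.add_sub_cancel] at *) <;> first | rfl | omega

theorem shiftCut_subst (N : ℕ) (σ : ℕ → Exp S) (t : Exp S) :
    subst (upN N (upN N σ)) (shiftCut N N t) = shiftCut N N (subst (upN N σ) t) := by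
  simp only [shiftCut, subst_rename, rename_subst]
  congr 1
  funext x
  rcases lt_or_ge x N with h | h
  · rw [if_pos h]
    simp [upN, h, rename]
  · rw [if_neg (by omega : ¬ x < N)]
    simp only [upN, if_neg (by omega : ¬ x + N < N), if_neg (by omega : ¬ x < N),
      Nat.add_sub_cancel]
    rw [rename_rename, rename_rename]
    congr 1
    funext y
    simp [(by omega : ¬ y + N < N)]

theorem Xarg_def {N : ℕ} (gi : Exp S) :
    Xarg N gi = lamN N (apps (lamN N (shiftCut N N gi)) (argsOf (Uarg N))) := rfl

theorem rename_Xarg (f : ℕ → ℕ) (N : ℕ) (gi : Exp S) :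
    rename f (Xarg N gi) = Xarg N (rename (liftN N f) gi) := by
  rw [Xarg_def, Xarg_def, rename_lamN, rename_apps, rename_lamN, map_argsOf,
    shiftCut_rename]
  rw [show (fun i : Fin N => rename (liftN N f) (Uarg N i))
        = (fun i : Fin N => (Uarg N i : Exp S)) by
      funext j; exact rename_Uarg f N j]

theorem subst_Xarg (σ : ℕ → Exp S) (N : ℕ) (gi : Exp S) :
    subst σ (Xarg N gi) = Xarg N (subst (upN N σ) gi) := by
  rw [Xarg_def, Xarg_def, subst_lamN, subst_apps, subst_lamN, map_argsOf,
    shiftCut_subst]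
  rw [show (fun i : Fin N => subst (upN N σ) (Uarg N i))
        = (fun i : Fin N => (Uarg N i : Exp S)) by
      funext j; exact subst_Uarg σ N j]

theorem rename_letrecTrans (f : ℕ → ℕ) (N : ℕ) (g : Fin N → Exp S) (t : Exp S) :
    rename f (letrecTrans N g t)
      = letrecTrans N (fun i => rename (liftN N f) (g i)) (rename (liftN N f) t) := by
  simp only [letrecTrans, rename_apps, rename_lamN, map_argsOf, shiftCut_rename,
    rename_Uarg, rename_Xarg]

theorem subst_letrecTrans (σ : ℕ → Exp S) (N : ℕ) (g : Fin N → Exp S) (t : Exp S) :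
    subst σ (letrecTrans N g t)
      = letrecTrans N (fun i => subst (upN N σ) (g i)) (subst (upN N σ) t) := by
  simp only [letrecTrans, subst_apps, subst_lamN, map_argsOf, shiftCut_subst,
    subst_Uarg, subst_Xarg]

/-! ### `Ntr` commutes with renaming and substitution -/

theorem Ntr_rename (f : ℕ → ℕ) (e : Exp S) : Ntr (rename f e) = rename f (Ntr e) := by
  induction e generalizing f with
  | var k => rfl
  | app u v ihu ihv => simp [rename, Ntr, ihu, ihv]
  | lam u ih => simp [rename, Ntr, ih]
  | constr T c args ih =>
      simp only [rename, Ntr]; exact congrArg _ (funext fun i => ih i f)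
  | seqE u v ihu ihv => simp [rename, Ntr, ihu, ihv]
  | caseE T e alts ihe ih =>
      simp only [rename, Ntr, ihe]
      exact congrArg _ (funext fun c => ih c _)
  | letrecE n b t ihb iht =>
      simp only [rename, Ntr, rename_letrecTrans]
      congr 1
      · funext i; exact ihb i _
      · exact iht _

theorem Ntr_upN (m : ℕ) (σ : ℕ → Exp S) :
    (fun k => Ntr (upN m σ k)) = upN m (fun k => Ntr (σ k)) := by
  funext x
  simp only [upN]
  rcases lt_or_ge x m with h | h
  · rw [if_pos h, if_pos h]; rfl
  · rw [if_neg (by omega : ¬ x < m), if_neg (by omega : ¬ x < m), Ntr_rename]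

theorem Ntr_subst (σ : ℕ → Exp S) (e : Exp S) :
    Ntr (subst σ e) = subst (fun k => Ntr (σ k)) (Ntr e) := by
  induction e generalizing σ with
  | var k => rfl
  | app u v ihu ihv => simp [subst, Ntr, ihu, ihv]
  | lam u ih => simp [subst, Ntr, ih, Ntr_upN]
  | constr T c args ih =>
      simp only [subst, Ntr]; exact congrArg _ (funext fun i => ih i σ)
  | seqE u v ihu ihv => simp [subst, Ntr, ihu, ihv]
  | caseE T e alts ihe ih =>
      simp only [subst, Ntr, ihe]
      exact congrArg _ (funext fun c => by rw [ih c, Ntr_upN])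
  | letrecE n b t ihb iht =>
      simp only [subst, Ntr, subst_letrecTrans]
      congr 1
      · funext i; rw [ihb i, Ntr_upN]
      · rw [iht, Ntr_upN]

end Core
namespace Core

variable {S : Sig}

/-! ### the beta-spine lemma -/

def appsA : List (Exp S) → ACtx S
  | [] => .hole
  | a :: l => compA (appsA l) (.appA .hole a)

theorem plugA_appsA (l : List (Exp S)) (h : Exp S) : plugA (appsA l) h = apps h l := by
  induction l generalizing h with
  | nil => rfl
  | cons a l ih =>
      show plugA (compA (appsA l) (.appA .hole a)) h = _
      rw [plugA_compA, ih]
      rfl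

/-- the parallel substitution determined by a spine of beta reductions -/
def ssub : List (Exp S) → ℕ → Exp S
  | [], m => .var m
  | a :: l, m =>
      if m = l.length then a
      else if m < l.length then ssub l m
      else .var (m - (l.length + 1))

theorem ssub_ge : ∀ (l : List (Exp S)) (j : ℕ), ssub l (j + l.length) = .var j := by
  intro l
  induction l with
  | nil => intro j; simp [ssub]
  | cons a l ih =>
      intro j
      simp only [ssub, List.length_cons]
      rw [if_neg (by omega), if_neg (by omega)]
      congr 1
      omega

theorem ssub_of_ge : ∀ (l : List (Exp S)) (m : ℕ), l.length ≤ m →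
    ssub l m = .var (m - l.length) := by
  intro l
  induction l with
  | nil => intro m _; simp [ssub]
  | cons a l ih =>
      intro m hm
      simp only [List.length_cons] at hm
      simp only [ssub]
      rw [if_neg (by omega), if_neg (by omega)]
      simp [List.length_cons]

theorem ssub_cons (a : Exp S) (l : List (Exp S)) :
    (fun m => subst (ssub l) (upN l.length (consSub a) m)) = ssub (a :: l) := by
  funext m
  rcases lt_trichotomy m l.length with h | h | h
  · rw [show upN l.length (consSub a) m = .var m by simp [upN, h]]
    show ssub l m = _
    simp only [ssub]
    rw [if_neg (by omega), if_pos h]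
  · subst h
    rw [show upN l.length (consSub a) l.length
          = rename (· + l.length) a by
        simp only [upN]
        rw [if_neg (by omega), Nat.sub_self]
        rfl]
    rw [subst_rename]
    rw [show (fun k => ssub l (k + l.length)) = (fun k => (Exp.var k : Exp S)) by
        funext k; exact ssub_ge l k]
    rw [subst_var]
    simp [ssub]
  · rw [show upN l.length (consSub a) m = .var (m - 1) by
        simp only [upN]
        rw [if_neg (by omega)]
        rw [show consSub a (m - l.length) = Exp.var (m - l.length - 1) by
          rw [show m - l.length = (m - l.length - 1) + 1 by omega]; rfl]
        simp only [rename]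
        congr 1
        omega]
    show ssub l (m - 1) = _
    rw [ssub_of_ge l (m-1) (by omega)]
    simp only [ssub]
    rw [if_neg (by omega), if_neg (by omega)]
    congr 1
    omega

theorem spine_cons_step (a : Exp S) (l : List (Exp S)) (e : Exp S) :
    lccStep (apps (lamN (a::l).length e) (a :: l))
      (apps (lamN l.length (subst (upN l.length (consSub a)) e)) l) := by
  rw [show apps (lamN (a::l).length e) (a::l)
        = apps (.app (.lam (lamN l.length e)) a) l from rfl,
      ← subst_lamN, ← plugA_appsA, ← plugA_appsA]
  exact lccStep_plugA (appsA l) ⟨.hole, _, _, LccBase.nbeta, rfl, rfl⟩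

theorem spine_rtg : ∀ (l : List (Exp S)) (e : Exp S),
    Relation.ReflTransGen lccStep (apps (lamN l.length e) l) (subst (ssub l) e) := by
  intro l
  induction l with
  | nil =>
      intro e
      show Relation.ReflTransGen lccStep e (subst (ssub []) e)
      rw [show ssub ([] : List (Exp S)) = fun k => Exp.var k from rfl, subst_var]
  | cons a l ih =>
      intro e
      refine Relation.ReflTransGen.head (spine_cons_step a l e) ?_
      have := ih (subst (upN l.length (consSub a)) e)
      rwa [subst_subst, ssub_cons] at this

theorem spine_tg (a : Exp S) (l : List (Exp S)) (e : Exp S) :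
    Relation.TransGen lccStep (apps (lamN (a::l).length e) (a :: l))
      (subst (ssub (a::l)) e) := by
  refine Relation.TransGen.head' (spine_cons_step a l e) ?_
  have := spine_rtg l (subst (upN l.length (consSub a)) e)
  rwa [subst_subst, ssub_cons] at this

/-! ### ssub on argsOf -/

theorem argsOf_succ {N : ℕ} (g : Fin (N+1) → Exp S) :
    argsOf g = g (Fin.last N) :: argsOf (fun i : Fin N => g i.castSucc) := by
  show (List.ofFn g).reverse = _
  rw [List.ofFn_succ', List.concat_eq_append, List.reverse_append]
  rfl

theorem ssub_argsOf : ∀ {N : ℕ} (g : Fin N → Exp S), ssub (argsOf g) = instSub g := by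
  intro N
  induction N with
  | zero =>
      intro g
      funext m
      show Exp.var m = _
      simp [instSub]
  | succ N ih =>
      intro g
      funext m
      rw [argsOf_succ]
      show (if m = (argsOf fun i : Fin N => g i.castSucc).length then _ else _) = _
      rw [length_argsOf]
      rcases lt_trichotomy m N with h | h | h
      · rw [if_neg (by omega), if_pos h, ih]
        simp only [instSub]
        rw [dif_pos h, dif_pos (by omega : m < N + 1)]
        congr 1
      · subst h
        rw [if_pos rfl]
        simp only [instSub]
        rw [dif_pos (by omega : m < m + 1)]
        rfl
      · rw [if_neg (by omega), if_neg (by omega)]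
        simp only [instSub]
        rw [dif_neg (by omega : ¬ m < N + 1)]

/-! ### the unfolding of translated letrecs -/

/-- the unfolded recursive bindings `D_i = X_i' X_1' … X_n'` -/
def Dfn (N : ℕ) (g : Fin N → Exp S) (i : Fin N) : Exp S :=
  apps (Xarg N (g i)) (argsOf (fun j => Xarg N (g j)))

theorem upN_instSub_shiftCut {N : ℕ} (X : Fin N → Exp S) (e : Exp S) :
    subst (upN N (instSub X)) (shiftCut N N e) = e := by
  rw [shiftCut, subst_rename]
  rw [show (fun k => upN N (instSub X) (if k < N then k else k + N))
        = (fun k => (Exp.var k : Exp S)) by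
      funext m
      rcases lt_or_ge m N with h | h
      · rw [if_pos h]; simp [upN, h]
      · rw [if_neg (by omega)]
        simp only [upN]
        rw [if_neg (by omega : ¬ m + N < N), Nat.add_sub_cancel]
        rw [show instSub X m = Exp.var (m - N) by
          simp only [instSub]; rw [dif_neg (by omega : ¬ m < N)]]
        simp only [rename]
        congr 1
        omega]
  exact subst_var e

theorem subst_instSub_Uarg {N : ℕ} (X : Fin N → Exp S) (j : Fin N) :
    subst (instSub X) (Uarg N j) = apps (X j) (argsOf X) := by
  simp only [Uarg, subst_apps, map_argsOf]
  rw [show subst (instSub X) (Exp.var (j:ℕ)) = X j by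
      show instSub X (j:ℕ) = X j
      simp only [instSub]; rw [dif_pos j.isLt],
    show (fun l : Fin N => subst (instSub X) (Exp.var (l:ℕ))) = X by
      funext l
      show instSub X (l:ℕ) = X l
      simp only [instSub]; rw [dif_pos l.isLt]]

theorem coreUnfold {N : ℕ} (g : Fin N → Exp S) (e : Exp S) :
    Relation.ReflTransGen lccStep
      (apps (lamN N (apps (lamN N (shiftCut N N e)) (argsOf (Uarg N))))
        (argsOf (fun i => Xarg N (g i))))
      (subst (instSub (Dfn N g)) e) := by
  have h1 := spine_rtg (argsOf (fun i => Xarg N (g i)))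
      (apps (lamN N (shiftCut N N e)) (argsOf (Uarg N)))
  rw [length_argsOf, ssub_argsOf] at h1
  have h2 : subst (instSub (fun i => Xarg N (g i)))
      (apps (lamN N (shiftCut N N e)) (argsOf (Uarg N)))
      = apps (lamN N e) (argsOf (Dfn N g)) := by
    rw [subst_apps, subst_lamN, upN_instSub_shiftCut, map_argsOf]
    rw [show (fun j : Fin N => subst (instSub fun i => Xarg N (g i)) (Uarg N j))
          = Dfn N g by funext j; rw [subst_instSub_Uarg]; rfl]
  rw [h2] at h1
  refine h1.trans ?_
  have h3 := spine_rtg (argsOf (Dfn N g)) e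
  rwa [length_argsOf, ssub_argsOf] at h3

theorem letrecTrans_unfold {N : ℕ} (g : Fin N → Exp S) (t : Exp S) :
    Relation.ReflTransGen lccStep (letrecTrans N g t) (subst (instSub (Dfn N g)) t) :=
  coreUnfold g t

theorem Dfn_unfold {N : ℕ} (g : Fin N → Exp S) (i : Fin N) :
    Relation.TransGen lccStep (Dfn N g i) (subst (instSub (Dfn N g)) (g i)) := by
  have hlen : (argsOf (fun j => Xarg N (g j))).length = N := length_argsOf _
  have hN : 0 < N := i.pos
  obtain ⟨a, l, hl⟩ : ∃ a l, argsOf (fun j => Xarg N (g j)) = a :: l := by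
    cases hc : argsOf (fun j => Xarg N (g j)) with
    | nil => rw [hc] at hlen; simp at hlen; omega
    | cons a l => exact ⟨a, l, rfl⟩
  have h0 : Dfn N g i
      = apps (lamN N (apps (lamN N (shiftCut N N (g i))) (argsOf (Uarg N))))
          (argsOf (fun j => Xarg N (g j))) := rfl
  have h1 := spine_tg a l (apps (lamN N (shiftCut N N (g i))) (argsOf (Uarg N)))
  rw [← hl, hlen, ssub_argsOf] at h1
  rw [h0]
  have h2 : subst (instSub (fun j => Xarg N (g j)))
      (apps (lamN N (shiftCut N N (g i))) (argsOf (Uarg N)))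
      = apps (lamN N (g i)) (argsOf (Dfn N g)) := by
    rw [subst_apps, subst_lamN, upN_instSub_shiftCut, map_argsOf]
    rw [show (fun j : Fin N => subst (instSub fun j => Xarg N (g j)) (Uarg N j))
          = Dfn N g by funext j; rw [subst_instSub_Uarg]; rfl]
  rw [h2] at h1
  refine Relation.TransGen.trans_left h1 ?_
  have h3 := spine_rtg (argsOf (Dfn N g)) (g i)
  rwa [length_argsOf, ssub_argsOf] at h3

end Core
namespace Core

variable {S : Sig}

/-! ### the flattening translation -/

/-- like `Ntr`, but letrec-environments in reduction position are unfolded -/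
def Fl : Exp S → Exp S
  | .var k => .var k
  | .app u v => .app (Fl u) (Ntr v)
  | .lam u => .lam (Ntr u)
  | .constr T c args => .constr T c (fun i => Ntr (args i))
  | .seqE u v => .seqE (Fl u) (Ntr v)
  | .caseE T e alts => .caseE T (Fl e) (fun c => Ntr (alts c))
  | .letrecE n b t => subst (instSub (Dfn (n+1) (fun i => Ntr (b i)))) (Fl t)

def NtrA : ACtx S → ACtx S
  | .hole => .hole
  | .appA A t => .appA (NtrA A) (Ntr t)
  | .seqA A t => .seqA (NtrA A) (Ntr t)
  | .caseA T A alts => .caseA T (NtrA A) (fun c => Ntr (alts c))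

theorem Ntr_plugA (A : ACtx S) (e : Exp S) :
    Ntr (plugA A e) = plugA (NtrA A) (Ntr e) := by
  induction A with
  | hole => rfl
  | appA A t ih => simp [plugA, NtrA, Ntr, ih]
  | seqA A t ih => simp [plugA, NtrA, Ntr, ih]
  | caseA T A alts ih => simp [plugA, NtrA, Ntr, ih]

theorem Fl_plugA (A : ACtx S) (e : Exp S) :
    Fl (plugA A e) = plugA (NtrA A) (Fl e) := by
  induction A with
  | hole => rfl
  | appA A t ih => simp [plugA, NtrA, Fl, ih]
  | seqA A t ih => simp [plugA, NtrA, Fl, ih]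
  | caseA T A alts ih => simp [plugA, NtrA, Fl, ih]

theorem Ntr_to_Fl (e : Exp S) : Relation.ReflTransGen lccStep (Ntr e) (Fl e) := by
  induction e with
  | var k => exact .refl
  | app u v ihu ihv =>
      have := rtg_lccStep_plugA (.appA .hole (Ntr v)) ihu
      simpa [plugA, Ntr, Fl] using this
  | lam u ih => exact .refl
  | constr T c args ih => exact .refl
  | seqE u v ihu ihv =>
      have := rtg_lccStep_plugA (.seqA .hole (Ntr v)) ihu
      simpa [plugA, Ntr, Fl] using this
  | caseE T e alts ihe ih =>
      have := rtg_lccStep_plugA (.caseA T .hole (fun c => Ntr (alts c))) ihe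
      simpa [plugA, Ntr, Fl] using this
  | letrecE n b t ihb iht =>
      show Relation.ReflTransGen lccStep
        (letrecTrans (n+1) (fun i => Ntr (b i)) (Ntr t)) _
      refine (letrecTrans_unfold _ _).trans ?_
      exact rtg_lccStep_subst _ iht

/-! ### frame-stack substitutions -/

/-- the composite substitution unfolding a stack of letrec frames -/
def sigF : List (Frame S) → ℕ → Exp S
  | [] => fun k => .var k
  | ⟨n, b⟩ :: fs => fun k => subst (instSub (Dfn (n+1) (fun i => Ntr (b i)))) (sigF fs k)

theorem Fl_plugFrames (fs : List (Frame S)) (x : Exp S) :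
    Fl (plugFrames fs x) = subst (sigF fs) (Fl x) := by
  induction fs with
  | nil => show Fl x = _; rw [show sigF ([] : List (Frame S)) = fun k => Exp.var k from rfl, subst_var]
  | cons f fs ih =>
      obtain ⟨n, b⟩ := f
      show subst (instSub (Dfn (n+1) (fun i => Ntr (b i)))) (Fl (plugFrames fs x)) = _
      rw [ih, subst_subst]
      rfl

theorem sigF_append (fs fs' : List (Frame S)) (k : ℕ) :
    sigF (fs ++ fs') k = subst (sigF fs) (sigF fs' k) := by
  induction fs with
  | nil => show _ = subst (fun k => Exp.var k) _; rw [subst_var]; rfl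
  | cons f fs ih =>
      obtain ⟨n, b⟩ := f
      show subst (instSub (Dfn (n+1) (fun i => Ntr (b i)))) (sigF (fs ++ fs') k) = _
      rw [ih, subst_subst]
      rfl

theorem subst_sigF_append (fs fs' : List (Frame S)) (y : Exp S) :
    subst (sigF (fs ++ fs')) y = subst (sigF fs) (subst (sigF fs') y) := by
  rw [subst_subst]
  congr 1
  funext k
  exact sigF_append fs fs' k

theorem instSub_shift {N : ℕ} (X : Fin N → Exp S) :
    (fun m => instSub X (m + N)) = fun m => (Exp.var m : Exp S) := by
  funext m
  simp only [instSub]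
  rw [dif_neg (by omega : ¬ m + N < N)]
  congr 1
  omega

theorem subst_instSub_rename {N : ℕ} (X : Fin N → Exp S) (y : Exp S) :
    subst (instSub X) (rename (· + N) y) = y := by
  rw [subst_rename]
  rw [show (fun k => instSub X (k + N)) = fun m => (Exp.var m : Exp S) from instSub_shift X]
  exact subst_var y

theorem gcp_sigF (fs : List (Frame S)) (k : ℕ) (e : Exp S)
    (h : lookRev fs.reverse k = some e) :
    Relation.TransGen lccStep (sigF fs k) (subst (sigF fs) (Ntr e)) := by
  induction fs using List.reverseRecOn generalizing k e with
  | nil => simp [lookRev] at h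
  | append_singleton fs' f ih =>
      obtain ⟨n, b⟩ := f
      rw [List.reverse_append] at h
      change lookRev ((⟨n, b⟩ : Frame S) :: fs'.reverse) k = _ at h
      by_cases hk : k < n + 1
      · rw [show lookRev (⟨n,b⟩ :: fs'.reverse) k = some (b ⟨k, hk⟩) by
            simp [lookRev, hk]] at h
        obtain rfl : b ⟨k, hk⟩ = e := by injection h
        have hsig1 : sigF [(⟨n, b⟩ : Frame S)] k = Dfn (n+1) (fun i => Ntr (b i)) ⟨k, hk⟩ := by
          show instSub (Dfn (n+1) (fun i => Ntr (b i))) k = _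
          simp only [instSub]
          rw [dif_pos hk]
        have h1 : sigF (fs' ++ [⟨n, b⟩]) k
            = subst (sigF fs') (Dfn (n+1) (fun i => Ntr (b i)) ⟨k, hk⟩) := by
          rw [sigF_append, hsig1]
        rw [h1]
        have h2 := tg_lccStep_subst (sigF fs')
          (Dfn_unfold (fun i => Ntr (b i)) ⟨k, hk⟩)
        refine h2.trans_left (Relation.ReflTransGen.refl.trans ?_)
        rw [subst_sigF_append]
        rfl
      · rw [show lookRev (⟨n,b⟩ :: fs'.reverse) k
              = (lookRev fs'.reverse (k - (n+1))).map (rename (· + (n+1))) by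
            simp [lookRev, hk]] at h
        obtain ⟨e', he', rfl⟩ : ∃ e', lookRev fs'.reverse (k - (n+1)) = some e'
            ∧ e = rename (· + (n+1)) e' := by
          cases hle : lookRev fs'.reverse (k - (n+1)) with
          | none => rw [hle] at h; simp at h
          | some e' => rw [hle] at h; simp at h; exact ⟨e', rfl, h.symm⟩
        have h1 : sigF (fs' ++ [⟨n, b⟩]) k = sigF fs' (k - (n+1)) := by
          rw [sigF_append]
          show subst (sigF fs') (subst (instSub (Dfn (n+1) (fun i => Ntr (b i)))) (Exp.var k)) = _
          rw [show subst (instSub (Dfn (n+1) (fun i => Ntr (b i)))) (Exp.var k)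
                = Exp.var (k - (n+1)) by
              show instSub _ k = _
              simp only [instSub]; rw [dif_neg hk]]
          rfl
        have h2 : subst (sigF (fs' ++ [⟨n, b⟩])) (Ntr (rename (· + (n+1)) e'))
            = subst (sigF fs') (Ntr e') := by
          rw [Ntr_rename, subst_sigF_append]
          congr 1
          show subst (fun m => subst (instSub (Dfn (n+1) (fun i => Ntr (b i)))) (Exp.var m))
              (rename (· + (n+1)) (Ntr e')) = _
          rw [show (fun m => subst (instSub (Dfn (n+1) (fun i => Ntr (b i)))) (Exp.var m))
                = instSub (Dfn (n+1) (fun i => Ntr (b i))) from rfl]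
          exact subst_instSub_rename _ _
        rw [h1, h2]
        exact ih _ _ he'

theorem sigF_none (fs : List (Frame S)) (k : ℕ)
    (h : lookRev fs.reverse k = none) : ∃ m, sigF fs k = (Exp.var m : Exp S) := by
  induction fs using List.reverseRecOn generalizing k with
  | nil => exact ⟨k, rfl⟩
  | append_singleton fs' f ih =>
      obtain ⟨n, b⟩ := f
      rw [List.reverse_append] at h
      change lookRev ((⟨n, b⟩ : Frame S) :: fs'.reverse) k = _ at h
      by_cases hk : k < n + 1
      · simp [lookRev, hk] at h
      · rw [show lookRev (⟨n,b⟩ :: fs'.reverse) k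
              = (lookRev fs'.reverse (k - (n+1))).map (rename (· + (n+1))) by
            simp [lookRev, hk]] at h
        have hle : lookRev fs'.reverse (k - (n+1)) = none := by
          cases hle : lookRev fs'.reverse (k - (n+1)) with
          | none => rfl
          | some e' => rw [hle] at h; simp at h
        obtain ⟨m, hm⟩ := ih _ hle
        refine ⟨m, ?_⟩
        rw [sigF_append]
        show subst (sigF fs') (subst (instSub (Dfn (n+1) (fun i => Ntr (b i)))) (Exp.var k)) = _
        rw [show subst (instSub (Dfn (n+1) (fun i => Ntr (b i)))) (Exp.var k)
              = Exp.var (k - (n+1)) by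
            show instSub _ k = _
            simp only [instSub]; rw [dif_neg hk]]
        exact hm

end Core
namespace Core

variable {S : Sig}

/-! ### the termination measure for letrec-shifting rules -/

def mua : ℕ → Exp S → ℕ
  | k, .app u _ => mua (k+1) u
  | k, .seqE u _ => mua (k+1) u
  | k, .caseE _ e _ => mua (k+1) e
  | k, .letrecE _ _ t => k + mua k t
  | _, _ => 0

def wA : ACtx S → ℕ
  | .hole => 0
  | .appA A _ => wA A + 1
  | .seqA A _ => wA A + 1
  | .caseA _ A _ => wA A + 1

theorem mua_plugA (A : ACtx S) (k : ℕ) (r : Exp S) :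
    mua k (plugA A r) = mua (k + wA A) r := by
  induction A generalizing k with
  | hole => rfl
  | appA A t ih =>
      show mua (k+1) (plugA A r) = _
      rw [ih]
      congr 1
      simp [wA]
      omega
  | seqA A t ih =>
      show mua (k+1) (plugA A r) = _
      rw [ih]
      congr 1
      simp [wA]
      omega
  | caseA T A alts ih =>
      show mua (k+1) (plugA A r) = _
      rw [ih]
      congr 1
      simp [wA]
      omega

theorem mua_plugFrames (fs : List (Frame S)) (x : Exp S) :
    mua 0 (plugFrames fs x) = mua 0 x := by
  induction fs with
  | nil => rfl
  | cons f fs ih =>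
      obtain ⟨n, b⟩ := f
      show 0 + mua 0 (plugFrames fs x) = _
      rw [ih]
      omega

theorem muN_decomp (fs : List (Frame S)) (A : ACtx S) (r : Exp S) :
    mua 0 (plugFrames fs (plugA A r)) = mua (wA A) r := by
  rw [mua_plugFrames, mua_plugA, Nat.zero_add]

/-! ### auxiliary facts about `Ntr` and values -/

theorem Ntr_consSub (t : Exp S) :
    (fun k => Ntr (consSub t k)) = consSub (Ntr t) := by
  funext k
  cases k <;> rfl

theorem Ntr_instSub {m : ℕ} (args : Fin m → Exp S) :
    (fun k => Ntr (instSub args k)) = instSub (fun i => Ntr (args i)) := by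
  funext k
  by_cases h : k < m
  · simp only [instSub]; rw [dif_pos h, dif_pos h]
  · simp only [instSub]; rw [dif_neg h, dif_neg h]; rfl

theorem Fl_value {v : Exp S} (h : isValue v) : Fl v = Ntr v := by
  cases v <;> first | rfl | simp [isValue] at h

theorem isValue_Ntr {v : Exp S} (h : isValue v) : isValue (Ntr v) := by
  cases v <;> simp [isValue, Ntr] at h ⊢

/-! ### the key simulation diagram -/

theorem keyDiag_base_step {fs : List (Frame S)} {A : ACtx S} {r r' : Exp S}
    (hstep : lccStep (Fl r) (Ntr r')) :
    Relation.TransGen lccStep (Fl (plugFrames fs (plugA A r)))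
      (Fl (plugFrames fs (plugA A r'))) := by
  rw [Fl_plugFrames, Fl_plugA, subst_plugA, Fl_plugFrames, Fl_plugA, subst_plugA]
  refine Relation.TransGen.head' (lccStep_plugA _ (lccStep_subst _ hstep)) ?_
  exact rtg_lccStep_plugA _ (rtg_lccStep_subst _ (Ntr_to_Fl r'))

theorem keyDiag_base_eq {fs : List (Frame S)} {A : ACtx S} {r r' : Exp S}
    (heq : Fl r = Fl r') :
    Fl (plugFrames fs (plugA A r)) = Fl (plugFrames fs (plugA A r')) := by
  rw [Fl_plugFrames, Fl_plugA, heq, ← Fl_plugA, ← Fl_plugFrames]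

theorem keyDiag {s s' : Exp S} (h : NStep s s') :
    (Fl s = Fl s' ∧ mua 0 s' < mua 0 s) ∨ Relation.TransGen lccStep (Fl s) (Fl s') := by
  cases h with
  | base hb =>
      rename_i fs A r r'
      cases hb with
      | @beta u t =>
          right
          refine keyDiag_base_step ?_
          refine ⟨.hole, _, _, LccBase.nbeta, rfl, ?_⟩
          show Ntr (subst (consSub t) u) = subst (consSub (Ntr t)) (Ntr u)
          rw [Ntr_subst, Ntr_consSub]
      | seqv hv =>
          right
          refine keyDiag_base_step ?_
          refine ⟨.hole, _, _, LccBase.nseq (isValue_Ntr hv), ?_, rfl⟩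
          simp only [Fl]
          rw [Fl_value hv]
          rfl
      | @casec T c args alts =>
          right
          refine keyDiag_base_step ?_
          refine ⟨.hole, _, _, LccBase.ncase, rfl, ?_⟩
          show Ntr (subst (instSub args) (alts c))
              = subst (instSub (fun i => Ntr (args i))) (Ntr (alts c))
          rw [Ntr_subst, Ntr_instSub]
      | @lapp n b e t =>
          left
          have hFr : Fl (Exp.app (.letrecE n b e) t)
              = Fl (.letrecE n b (.app e (rename (· + (n+1)) t))) := by
            show Exp.app (subst (instSub (Dfn (n+1) (fun i => Ntr (b i)))) (Fl e)) (Ntr t)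
              = subst (instSub (Dfn (n+1) (fun i => Ntr (b i))))
                  (.app (Fl e) (Ntr (rename (· + (n+1)) t)))
            rw [Ntr_rename]
            show _ = Exp.app (subst (instSub (Dfn (n+1) (fun i => Ntr (b i)))) (Fl e))
              (subst (instSub (Dfn (n+1) (fun i => Ntr (b i))))
                (rename (· + (n+1)) (Ntr t)))
            rw [subst_instSub_rename]
          refine ⟨keyDiag_base_eq hFr, ?_⟩
          rw [muN_decomp, muN_decomp]
          show wA A + mua (wA A) (Exp.app e (rename (· + (n+1)) t))
              < mua (wA A + 1) (Exp.letrecE n b e)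
          show wA A + mua (wA A + 1) e < (wA A + 1) + mua (wA A + 1) e
          omega
      | @lseq n b e t =>
          left
          have hFr : Fl (Exp.seqE (.letrecE n b e) t)
              = Fl (.letrecE n b (.seqE e (rename (· + (n+1)) t))) := by
            show Exp.seqE (subst (instSub (Dfn (n+1) (fun i => Ntr (b i)))) (Fl e)) (Ntr t)
              = subst (instSub (Dfn (n+1) (fun i => Ntr (b i))))
                  (.seqE (Fl e) (Ntr (rename (· + (n+1)) t)))
            rw [Ntr_rename]
            show _ = Exp.seqE (subst (instSub (Dfn (n+1) (fun i => Ntr (b i)))) (Fl e))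
              (subst (instSub (Dfn (n+1) (fun i => Ntr (b i))))
                (rename (· + (n+1)) (Ntr t)))
            rw [subst_instSub_rename]
          refine ⟨keyDiag_base_eq hFr, ?_⟩
          rw [muN_decomp, muN_decomp]
          show wA A + mua (wA A + 1) e < (wA A + 1) + mua (wA A + 1) e
          omega
      | @lcase n b e T alts =>
          left
          have hFr : Fl (Exp.caseE T (.letrecE n b e) alts)
              = Fl (.letrecE n b
                  (.caseE T e (fun c => rename (liftN (S.arity T c) (· + (n+1))) (alts c)))) := by
            show Exp.caseE T (subst (instSub (Dfn (n+1) (fun i => Ntr (b i)))) (Fl e))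
                (fun c => Ntr (alts c))
              = subst (instSub (Dfn (n+1) (fun i => Ntr (b i))))
                  (.caseE T (Fl e)
                    (fun c => Ntr (rename (liftN (S.arity T c) (· + (n+1))) (alts c))))
            show _ = Exp.caseE T (subst (instSub (Dfn (n+1) (fun i => Ntr (b i)))) (Fl e))
              (fun c => subst (upN (S.arity T c) (instSub (Dfn (n+1) (fun i => Ntr (b i)))))
                (Ntr (rename (liftN (S.arity T c) (· + (n+1))) (alts c))))
            congr 1
            funext c
            rw [Ntr_rename, subst_rename]
            rw [show (fun k => upN (S.arity T c) (instSub (Dfn (n+1) (fun i => Ntr (b i))))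
                  (liftN (S.arity T c) (· + (n+1)) k)) = (fun k => (Exp.var k : Exp S)) by
              funext k
              set m := S.arity T c
              rcases lt_or_ge k m with hk | hk
              · rw [show liftN m (· + (n+1)) k = k by simp [liftN, hk]]
                simp [upN, hk]
              · rw [show liftN m (· + (n+1)) k = (k - m) + (n+1) + m by
                    simp only [liftN]; rw [if_neg (by omega : ¬ k < m)]]
                simp only [upN]
                rw [if_neg (by omega), Nat.add_sub_cancel]
                rw [show instSub (Dfn (n+1) (fun i => Ntr (b i))) (k - m + (n+1))
                      = Exp.var (k - m) by
                    simp only [instSub]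
                    rw [dif_neg (by omega)]
                    congr 1
                    omega]
                simp only [rename]
                congr 1
                omega]
            exact (subst_var _).symm
          refine ⟨keyDiag_base_eq hFr, ?_⟩
          rw [muN_decomp, muN_decomp]
          show wA A + mua (wA A + 1) e < (wA A + 1) + mua (wA A + 1) e
          omega
  | gcp hlook =>
      rename_i fs A k e
      right
      rw [Fl_plugFrames, Fl_plugA, subst_plugA, Fl_plugFrames, Fl_plugA, subst_plugA]
      have h1 : Relation.TransGen lccStep (subst (sigF fs) (Fl (Exp.var k)))
          (subst (sigF fs) (Ntr e)) := gcp_sigF fs k e hlook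
      exact Relation.TransGen.trans_left (tg_lccStep_plugA _ h1)
        (rtg_lccStep_plugA _ (rtg_lccStep_subst _ (Ntr_to_Fl e)))

end Core
namespace Core

variable {S : Sig}

/-! ### blocked heads: irreducible, non-value configurations of `L_lcc` -/

inductive BlockedHead : Exp S → Prop where
  | bvar (k : ℕ) : BlockedHead (.var k)
  | bappC {T c a v} : BlockedHead (.app (.constr T c a) v)
  | bcaseLam {T u alts} : BlockedHead (.caseE T (.lam u) alts)
  | bcaseC {T T'} {c' : S.CName T'} {a} {alts : (c : S.CName T) → Exp S}
      (hne : T' ≠ T) : BlockedHead (.caseE T (.constr T' c' a) alts)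

theorem blocked_not_value {h : Exp S} (hb : BlockedHead h) (A : ACtx S) :
    ¬ isValue (plugA A h) := by
  cases A with
  | hole => cases hb <;> simp [plugA, isValue]
  | appA A t => simp [plugA, isValue]
  | seqA A t => simp [plugA, isValue]
  | caseA T A alts => simp [plugA, isValue]

theorem lccBase_app_inv {f a e : Exp S} (h : LccBase (.app f a) e) :
    ∃ u, f = .lam u := by
  cases h
  exact ⟨_, rfl⟩

theorem lccBase_seq_inv {f a e : Exp S} (h : LccBase (.seqE f a) e) : isValue f := by
  cases h
  assumption

theorem lccBase_case_inv {T} {f : Exp S} {alts} {e : Exp S}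
    (h : LccBase (.caseE T f alts) e) : ∃ c args, f = .constr T c args := by
  cases h
  exact ⟨_, _, rfl⟩

theorem lccBase_not_constr {T c a} {r' : Exp S} (h : LccBase (.constr T c a) r') :
    False := by cases h

theorem lccBase_not_lam {u : Exp S} {r' : Exp S} (h : LccBase (.lam u) r') :
    False := by cases h

theorem blocked_ne {h : Exp S} (hb : BlockedHead h) :
    ∀ (A : ACtx S) {B : ACtx S} {r r' : Exp S}, LccBase r r' →
      plugA A h = plugA B r → False := by
  intro A
  induction A with
  | hole =>
      intro B r r' hbase heq
      cases B with
      | hole =>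
          have heq' : h = r := heq
          subst heq'
          cases hb with
          | bvar k => cases hbase
          | bappC => cases hbase
          | bcaseLam => cases hbase
          | bcaseC hne => cases hbase; exact hne rfl
      | appA B₁ t =>
          have heq' : h = .app (plugA B₁ r) t := heq
          cases hb with
          | bvar k => simp at heq'
          | bappC =>
              obtain ⟨h1, h2⟩ := Exp.app.inj heq'
              obtain ⟨rfl, rfl⟩ := plugA_eq_constr h1.symm
              exact lccBase_not_constr hbase
          | bcaseLam => simp at heq'
          | bcaseC hne => simp at heq'
      | seqA B₁ t =>
          have heq' : h = .seqE (plugA B₁ r) t := heq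
          cases hb <;> simp at heq'
      | caseA T₀ B₁ alts₀ =>
          have heq' : h = .caseE T₀ (plugA B₁ r) alts₀ := heq
          cases hb with
          | bvar k => simp at heq'
          | bappC => simp at heq'
          | bcaseLam =>
              obtain ⟨h1, h2, h3⟩ := Exp.caseE.inj heq'
              subst h1
              obtain ⟨rfl, rfl⟩ := plugA_eq_lam h2.symm
              exact lccBase_not_lam hbase
          | bcaseC hne =>
              obtain ⟨h1, h2, h3⟩ := Exp.caseE.inj heq'
              subst h1
              obtain ⟨rfl, rfl⟩ := plugA_eq_constr h2.symm
              exact lccBase_not_constr hbase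
  | appA A₁ t ih =>
      intro B r r' hbase heq
      cases B with
      | hole =>
          have heq' : Exp.app (plugA A₁ h) t = r := heq
          subst heq'
          obtain ⟨u, hu⟩ := lccBase_app_inv hbase
          obtain ⟨rfl, rfl⟩ := plugA_eq_lam hu
          cases hb
      | appA B₁ t' =>
          have heq' : Exp.app (plugA A₁ h) t = .app (plugA B₁ r) t' := heq
          obtain ⟨h1, h2⟩ := Exp.app.inj heq'
          exact ih hbase h1
      | seqA B₁ t' => simp [plugA] at heq
      | caseA T₀ B₁ alts₀ => simp [plugA] at heq
  | seqA A₁ t ih =>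
      intro B r r' hbase heq
      cases B with
      | hole =>
          have heq' : Exp.seqE (plugA A₁ h) t = r := heq
          subst heq'
          exact blocked_not_value hb A₁ (lccBase_seq_inv hbase)
      | appA B₁ t' => simp [plugA] at heq
      | seqA B₁ t' =>
          have heq' : Exp.seqE (plugA A₁ h) t = .seqE (plugA B₁ r) t' := heq
          obtain ⟨h1, h2⟩ := Exp.seqE.inj heq'
          exact ih hbase h1
      | caseA T₀ B₁ alts₀ => simp [plugA] at heq
  | caseA T A₁ alts ih =>
      intro B r r' hbase heq
      cases B with
      | hole =>
          have heq' : Exp.caseE T (plugA A₁ h) alts = r := heq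
          subst heq'
          obtain ⟨c, args, hc⟩ := lccBase_case_inv hbase
          obtain ⟨rfl, rfl⟩ := plugA_eq_constr hc
          cases hb
      | appA B₁ t' => simp [plugA] at heq
      | seqA B₁ t' => simp [plugA] at heq
      | caseA T₀ B₁ alts₀ =>
          have heq' : Exp.caseE T (plugA A₁ h) alts = .caseE T₀ (plugA B₁ r) alts₀ := heq
          obtain ⟨h1, h2, h3⟩ := Exp.caseE.inj heq'
          subst h1
          exact ih hbase h2

theorem not_lccConv_blocked {h : Exp S} (hb : BlockedHead h) (A : ACtx S) :
    ¬ lccConv (plugA A h) := by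
  rintro ⟨v, hrtg, hv⟩
  rcases Relation.ReflTransGen.cases_head hrtg with heq | ⟨c, hstep, _⟩
  · exact blocked_not_value hb A (heq ▸ hv)
  · obtain ⟨B, r, r', hbase, heqq, _⟩ := hstep
    exact blocked_ne hb A hbase heqq

/-! ### progress for `L_name` -/

def isCompound : Exp S → Prop
  | .app _ _ => True
  | .seqE _ _ => True
  | .caseE _ _ _ => True
  | _ => False

def PGoal (s : Exp S) : Prop :=
  (∃ u, NStep s u) ∨ isNameWhnf s ∨ ¬ lccConv (Fl s)

theorem plugFrames_append (fs fs' : List (Frame S)) (x : Exp S) :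
    plugFrames (fs ++ fs') x = plugFrames fs (plugFrames fs' x) := by
  induction fs with
  | nil => rfl
  | cons f fs ih =>
      obtain ⟨n, b⟩ := f
      show Exp.letrecE n b (plugFrames (fs ++ fs') x) = _
      rw [ih]
      rfl

theorem stuck_head {fs : List (Frame S)} {A : ACtx S} {t : Exp S} (B : ACtx S)
    {h0 : Exp S} (hsplit : subst (sigF fs) (Fl t) = plugA B h0) (hb : BlockedHead h0) :
    ¬ lccConv (Fl (plugFrames fs (plugA A t))) := by
  rw [Fl_plugFrames, Fl_plugA, subst_plugA, hsplit, ← plugA_compA]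
  exact not_lccConv_blocked hb _

theorem progressAux :
    ∀ (t : Exp S) (fs : List (Frame S)) (A : ACtx S),
      (A = ACtx.hole ∨ isCompound t) → PGoal (plugFrames fs (plugA A t)) := by
  intro t
  induction t with
  | var k =>
      intro fs A _
      cases hl : lookRev fs.reverse k with
      | some e => exact Or.inl ⟨_, NStep.gcp (A := A) hl⟩
      | none =>
          refine Or.inr (Or.inr ?_)
          obtain ⟨m, hm⟩ := sigF_none fs k hl
          refine stuck_head .hole ?_ (BlockedHead.bvar m)
          show sigF fs k = _
          rw [hm]
          rfl
  | lam u ihu =>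
      intro fs A hA
      rcases hA with rfl | hc
      · exact Or.inr (Or.inl ⟨fs, .lam u, rfl, trivial⟩)
      · exact absurd hc (by simp [isCompound])
  | constr T c args ih =>
      intro fs A hA
      rcases hA with rfl | hc
      · exact Or.inr (Or.inl ⟨fs, .constr T c args, rfl, trivial⟩)
      · exact absurd hc (by simp [isCompound])
  | letrecE n b t' ihb iht =>
      intro fs A hA
      rcases hA with rfl | hc
      · have h := iht (fs ++ [⟨n, b⟩]) .hole (Or.inl rfl)
        rw [plugFrames_append] at h
        exact h
      · exact absurd hc (by simp [isCompound])
  | app u v ihu ihv =>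
      intro fs A _
      cases u with
      | lam u₀ => exact Or.inl ⟨_, NStep.base (fs := fs) (A := A) NBase.beta⟩
      | letrecE n' b' e' => exact Or.inl ⟨_, NStep.base (fs := fs) (A := A) NBase.lapp⟩
      | constr T c a =>
          refine Or.inr (Or.inr (stuck_head .hole rfl ?_))
          exact BlockedHead.bappC
      | var k =>
          cases hl : lookRev fs.reverse k with
          | some e =>
              have h := NStep.gcp (fs := fs) (A := compA A (.appA .hole v)) hl
              rw [plugA_compA, plugA_compA] at h
              exact Or.inl ⟨_, h⟩
          | none =>
              refine Or.inr (Or.inr ?_)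
              obtain ⟨m, hm⟩ := sigF_none fs k hl
              refine stuck_head (.appA .hole (subst (sigF fs) (Ntr v))) ?_
                (BlockedHead.bvar m)
              show Exp.app (sigF fs k) (subst (sigF fs) (Ntr v)) = _
              rw [hm]
              rfl
      | app u1 u2 =>
          have h := ihu fs (compA A (.appA .hole v)) (Or.inr trivial)
          rw [plugA_compA] at h
          exact h
      | seqE u1 u2 =>
          have h := ihu fs (compA A (.appA .hole v)) (Or.inr trivial)
          rw [plugA_compA] at h
          exact h
      | caseE T0 e0 alts0 =>
          have h := ihu fs (compA A (.appA .hole v)) (Or.inr trivial)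
          rw [plugA_compA] at h
          exact h
  | seqE u v ihu ihv =>
      intro fs A _
      cases u with
      | lam u₀ => exact Or.inl ⟨_, NStep.base (fs := fs) (A := A) (NBase.seqv trivial)⟩
      | constr T c a => exact Or.inl ⟨_, NStep.base (fs := fs) (A := A) (NBase.seqv trivial)⟩
      | letrecE n' b' e' => exact Or.inl ⟨_, NStep.base (fs := fs) (A := A) NBase.lseq⟩
      | var k =>
          cases hl : lookRev fs.reverse k with
          | some e =>
              have h := NStep.gcp (fs := fs) (A := compA A (.seqA .hole v)) hl
              rw [plugA_compA, plugA_compA] at h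
              exact Or.inl ⟨_, h⟩
          | none =>
              refine Or.inr (Or.inr ?_)
              obtain ⟨m, hm⟩ := sigF_none fs k hl
              refine stuck_head (.seqA .hole (subst (sigF fs) (Ntr v))) ?_
                (BlockedHead.bvar m)
              show Exp.seqE (sigF fs k) (subst (sigF fs) (Ntr v)) = _
              rw [hm]
              rfl
      | app u1 u2 =>
          have h := ihu fs (compA A (.seqA .hole v)) (Or.inr trivial)
          rw [plugA_compA] at h
          exact h
      | seqE u1 u2 =>
          have h := ihu fs (compA A (.seqA .hole v)) (Or.inr trivial)
          rw [plugA_compA] at h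
          exact h
      | caseE T0 e0 alts0 =>
          have h := ihu fs (compA A (.seqA .hole v)) (Or.inr trivial)
          rw [plugA_compA] at h
          exact h
  | caseE T u alts ihu ihalts =>
      intro fs A _
      cases u with
      | lam u₀ =>
          refine Or.inr (Or.inr (stuck_head .hole rfl ?_))
          exact BlockedHead.bcaseLam
      | constr T' c' a =>
          by_cases hT : T' = T
          · subst hT
            exact Or.inl ⟨_, NStep.base (fs := fs) (A := A) NBase.casec⟩
          · refine Or.inr (Or.inr (stuck_head .hole rfl ?_))
            exact BlockedHead.bcaseC hT
      | letrecE n' b' e' => exact Or.inl ⟨_, NStep.base (fs := fs) (A := A) NBase.lcase⟩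
      | var k =>
          cases hl : lookRev fs.reverse k with
          | some e =>
              have h := NStep.gcp (fs := fs) (A := compA A (.caseA T .hole alts)) hl
              rw [plugA_compA, plugA_compA] at h
              exact Or.inl ⟨_, h⟩
          | none =>
              refine Or.inr (Or.inr ?_)
              obtain ⟨m, hm⟩ := sigF_none fs k hl
              refine stuck_head
                (.caseA T .hole
                  (fun c => subst (upN (S.arity T c) (sigF fs)) (Ntr (alts c)))) ?_
                (BlockedHead.bvar m)
              show Exp.caseE T (sigF fs k) _ = _
              rw [hm]
              rfl
      | app u1 u2 =>
          have h := ihu fs (compA A (.caseA T .hole alts)) (Or.inr trivial)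
          rw [plugA_compA] at h
          exact h
      | seqE u1 u2 =>
          have h := ihu fs (compA A (.caseA T .hole alts)) (Or.inr trivial)
          rw [plugA_compA] at h
          exact h
      | caseE T0 e0 alts0 =>
          have h := ihu fs (compA A (.caseA T .hole alts)) (Or.inr trivial)
          rw [plugA_compA] at h
          exact h

end Core
namespace Core

variable {S : Sig}

/-! ### counting lcc reduction steps -/

def lccSteps : ℕ → Exp S → Exp S → Prop
  | 0, a, b => a = b
  | n+1, a, b => ∃ c, lccStep a c ∧ lccSteps n c b

theorem lccSteps_rtg {n : ℕ} {a b : Exp S} (h : lccSteps n a b) :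
    Relation.ReflTransGen lccStep a b := by
  induction n generalizing a with
  | zero => exact h ▸ .refl
  | succ n ih =>
      obtain ⟨c, h1, h2⟩ := h
      exact .head h1 (ih h2)

theorem rtg_lccSteps {a b : Exp S} (h : Relation.ReflTransGen lccStep a b) :
    ∃ n, lccSteps n a b := by
  induction h using Relation.ReflTransGen.head_induction_on with
  | refl => exact ⟨0, rfl⟩
  | head h1 h2 ih =>
      obtain ⟨n, hn⟩ := ih
      exact ⟨n+1, _, h1, hn⟩

def convIn (n : ℕ) (e : Exp S) : Prop := ∃ v, lccSteps n e v ∧ isValue v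

theorem conv_of_convIn {n : ℕ} {e : Exp S} (h : convIn n e) : lccConv e := by
  obtain ⟨v, h1, h2⟩ := h
  exact ⟨v, lccSteps_rtg h1, h2⟩

theorem convIn_of_conv {e : Exp S} (h : lccConv e) : ∃ n, convIn n e := by
  obtain ⟨v, h1, h2⟩ := h
  obtain ⟨n, hn⟩ := rtg_lccSteps h1
  exact ⟨n, v, hn, h2⟩

theorem convIn_step {e e' : Exp S} {n : ℕ} (hs : lccStep e e') (h : convIn n e) :
    ∃ m, m < n ∧ convIn m e' := by
  obtain ⟨v, h1, h2⟩ := h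
  cases n with
  | zero => exact absurd hs (fun hs' => isValue_no_step (h1 ▸ h2) hs')
  | succ n =>
      obtain ⟨c, hc1, hc2⟩ := h1
      obtain rfl : c = e' := lcc_det hc1 hs
      exact ⟨n, Nat.lt_succ_self n, v, hc2, h2⟩

theorem convIn_rtg {e e' : Exp S} (hr : Relation.ReflTransGen lccStep e e') :
    ∀ {n : ℕ}, convIn n e → ∃ m, m ≤ n ∧ convIn m e' := by
  induction hr using Relation.ReflTransGen.head_induction_on with
  | refl => exact fun h => ⟨_, le_refl _, h⟩
  | head h1 h2 ih =>
      intro n h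
      obtain ⟨m, hm, hc⟩ := convIn_step h1 h
      obtain ⟨m', hm', hc'⟩ := ih hc
      exact ⟨m', by omega, hc'⟩

theorem convIn_tg {e e' : Exp S} (ht : Relation.TransGen lccStep e e') {n : ℕ}
    (h : convIn n e) : ∃ m, m < n ∧ convIn m e' := by
  rw [Relation.TransGen.head'_iff] at ht
  obtain ⟨c, h1, h2⟩ := ht
  obtain ⟨m, hm, hc⟩ := convIn_step h1 h
  obtain ⟨m', hm', hc'⟩ := convIn_rtg h2 hc
  exact ⟨m', by omega, hc'⟩

/-! ### the two directions -/

theorem whnf_value {w : Exp S} (h : isNameWhnf w) : isValue (Fl w) := by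
  obtain ⟨fs, v, rfl, hv⟩ := h
  rw [Fl_plugFrames, Fl_value hv]
  exact isValue_subst _ (isValue_Ntr hv)

theorem forward_dir {s : Exp S} (h : nameConv s) : lccConv (Ntr s) := by
  obtain ⟨w, hrtg, hwh⟩ := h
  have hFl : Relation.ReflTransGen lccStep (Fl s) (Fl w) := by
    clear hwh
    induction hrtg using Relation.ReflTransGen.head_induction_on with
    | refl => exact .refl
    | head h1 h2 ih =>
        rcases keyDiag h1 with ⟨heq, _⟩ | htg
        · exact heq ▸ ih
        · exact htg.to_reflTransGen.trans ih
  exact ⟨Fl w, (Ntr_to_Fl s).trans hFl, whnf_value hwh⟩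

theorem backward_aux :
    ∀ n, ∀ m, ∀ s : Exp S, convIn n (Fl s) → mua 0 s ≤ m → nameConv s := by
  intro n
  induction n using Nat.strong_induction_on with
  | _ n ihn =>
      intro m
      induction m with
      | zero =>
          intro s hconv hmu
          rcases progressAux s [] .hole (Or.inl rfl) with ⟨s', hstep0⟩ | hwh | hnc
          · have hstep : NStep s s' := hstep0
            rcases keyDiag hstep with ⟨heq, hlt⟩ | htg
            · omega
            · obtain ⟨n', hn', hc'⟩ := convIn_tg htg hconv
              obtain ⟨w, h1, h2⟩ := ihn n' hn' (mua 0 s') s' hc' (le_refl _)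
              exact ⟨w, .head hstep h1, h2⟩
          · exact ⟨s, .refl, hwh⟩
          · exact absurd (conv_of_convIn hconv) hnc
      | succ m ihm =>
          intro s hconv hmu
          rcases progressAux s [] .hole (Or.inl rfl) with ⟨s', hstep0⟩ | hwh | hnc
          · have hstep : NStep s s' := hstep0
            rcases keyDiag hstep with ⟨heq, hlt⟩ | htg
            · obtain ⟨w, h1, h2⟩ := ihm s' (heq ▸ hconv) (by omega)
              exact ⟨w, .head hstep h1, h2⟩
            · obtain ⟨n', hn', hc'⟩ := convIn_tg htg hconv
              obtain ⟨w, h1, h2⟩ := ihn n' hn' (mua 0 s') s' hc' (le_refl _)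
              exact ⟨w, .head hstep h1, h2⟩
          · exact ⟨s, .refl, hwh⟩
          · exact absurd (conv_of_convIn hconv) hnc

theorem backward_dir {s : Exp S} (h : lccConv (Ntr s)) : nameConv s := by
  obtain ⟨n, hn⟩ := convIn_of_conv h
  obtain ⟨m, _, hm⟩ := convIn_rtg (Ntr_to_Fl s) hn
  exact backward_aux m (mua 0 s) s hm (le_refl _)

end Core

namespace Core

/-- The multi-fixpoint-combinator translation `N` is
convergence-equivalent: `s ↓_name` iff `N(s) ↓_lcc`. -/
theorem N_convergence_equivalent (S : Sig) :
    ∀ s : Exp S, nameConv s ↔ lccConv (Ntr s) :=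
  fun _ => ⟨forward_dir, backward_dir⟩

end Core
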